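/- arXiv:2306.04330 — 4 statements merged into one kernel-verified Lean document; each statement's English description precedes it below -/
import Mathlib

section
/- Let n, k, l be positive integers with n > k + l. If A ⊆ C([n],k) with |A| = C(n-s, k-s) for some 1 ≤ s ≤ k, then |D_l(A)| ≥ C(n-s, l), where D_l(A) = {D ∈ C([n],l) : there exists A ∈ A with A ∩ D = ∅}. Equality holds if and only if A = {F ∈ C([n],k) : S ⊆ F} for some s-element set S ⊆ [n]. -/
open Finset UV
open scoped FinsetFamily

section general
variable {α : Type*} [DecidableEq α]


lemma shadow_union (𝒜 ℬ : Finset (Finset α)) : ∂ (𝒜 ∪ ℬ) = ∂ 𝒜 ∪ ∂ ℬ := by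
  ext t
  simp only [mem_union, mem_shadow_iff]
  constructor
  · rintro ⟨s, hs | hs, h⟩
    · exact Or.inl ⟨s, hs, h⟩
    · exact Or.inr ⟨s, hs, h⟩
  · rintro (⟨s, hs, h⟩ | ⟨s, hs, h⟩)
    · exact ⟨s, Or.inl hs, h⟩
    · exact ⟨s, Or.inr hs, h⟩

lemma shadow_powersetCard {r : ℕ} (hr : 1 ≤ r) {W : Finset α} (hrW : r ≤ #W) :
    ∂ (W.powersetCard r) = W.powersetCard (r - 1) := by
  ext t
  rw [mem_shadow_iff_exists_sdiff, mem_powersetCard]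
  constructor
  · rintro ⟨s, hs, hts, h1⟩
    rw [mem_powersetCard] at hs
    refine ⟨hts.trans hs.1, ?_⟩
    have := card_sdiff_add_card_eq_card hts
    omega
  · rintro ⟨htW, htc⟩
    obtain ⟨s, hts, hsW, hsc⟩ := exists_subsuperset_card_eq htW (le_trans (by omega) (le_refl r))
      (by omega)
    refine ⟨s, mem_powersetCard.2 ⟨hsW, hsc⟩, hts, ?_⟩
    have := card_sdiff_add_card_eq_card hts
    omega



/-- link of `𝒜` at `x` -/
def flink (𝒜 : Finset (Finset α)) (x : α) : Finset (Finset α) :=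
  {a ∈ 𝒜 | x ∈ a}.image (fun a => a.erase x)

/-- deletion of `𝒜` at `x` -/
def fdel (𝒜 : Finset (Finset α)) (x : α) : Finset (Finset α) :=
  {a ∈ 𝒜 | x ∉ a}

lemma mem_flink {𝒜 : Finset (Finset α)} {x : α} {e : Finset α} :
    e ∈ flink 𝒜 x ↔ ∃ a ∈ 𝒜, x ∈ a ∧ a.erase x = e := by
  simp [flink, and_assoc]

lemma not_mem_of_mem_flink {𝒜 : Finset (Finset α)} {x : α} {e : Finset α}
    (he : e ∈ flink 𝒜 x) : x ∉ e := by
  obtain ⟨a, -, -, rfl⟩ := mem_flink.1 he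
  exact notMem_erase _ _

lemma insert_mem_of_mem_flink {𝒜 : Finset (Finset α)} {x : α} {e : Finset α}
    (he : e ∈ flink 𝒜 x) : insert x e ∈ 𝒜 := by
  obtain ⟨a, ha, hxa, rfl⟩ := mem_flink.1 he
  rwa [insert_erase hxa]

lemma card_flink_add_card_fdel (𝒜 : Finset (Finset α)) (x : α) :
    #(flink 𝒜 x) + #(fdel 𝒜 x) = #𝒜 := by
  have h1 : #(flink 𝒜 x) = #({a ∈ 𝒜 | x ∈ a}) := by
    apply card_image_of_injOn
    intro a ha b hb hab
    rw [mem_coe, mem_filter] at ha hb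
    have hab' : a.erase x = b.erase x := hab
    rw [← insert_erase ha.2, hab', insert_erase hb.2]
  rw [h1, fdel, card_filter_add_card_filter_not]

lemma sized_flink {𝒜 : Finset (Finset α)} {r : ℕ} (h : (𝒜 : Set (Finset α)).Sized r) (x : α) :
    ((flink 𝒜 x : Finset (Finset α)) : Set (Finset α)).Sized (r - 1) := by
  intro e he
  rw [mem_coe, mem_flink] at he
  obtain ⟨a, ha, hxa, rfl⟩ := he
  rw [card_erase_of_mem hxa, h ha]

lemma sized_fdel {𝒜 : Finset (Finset α)} {r : ℕ} (h : (𝒜 : Set (Finset α)).Sized r) (x : α) :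
    ((fdel 𝒜 x : Finset (Finset α)) : Set (Finset α)).Sized r := by
  intro e he
  rw [mem_coe, fdel, mem_filter] at he
  exact h he.1

lemma shadow_filter_mem (𝒜 : Finset (Finset α)) (x : α) :
    {t ∈ ∂ 𝒜 | x ∈ t} = (∂ (flink 𝒜 x)).image (insert x) := by
  ext t
  simp only [mem_filter, mem_image]
  constructor
  · rintro ⟨ht, hxt⟩
    rw [mem_shadow_iff] at ht
    obtain ⟨s, hs, y, hy, rfl⟩ := ht
    have hxy : x ≠ y := fun h => (notMem_erase y s) (h ▸ hxt)
    have hxs : x ∈ s := mem_of_mem_erase hxt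
    refine ⟨(s.erase x).erase y, ?_, ?_⟩
    · rw [mem_shadow_iff]
      exact ⟨s.erase x, mem_flink.2 ⟨s, hs, hxs, rfl⟩, y, mem_erase.2 ⟨fun h => hxy h.symm, hy⟩, rfl⟩
    · ext z
      simp only [mem_insert, mem_erase]
      constructor
      · rintro (rfl | ⟨hzy, hzx, hzs⟩)
        · exact ⟨hxy, hxs⟩
        · exact ⟨hzy, hzs⟩
      · rintro ⟨hzy, hzs⟩
        by_cases hz : z = x
        · exact Or.inl hz
        · exact Or.inr ⟨hzy, hz, hzs⟩
  · rintro ⟨e, he, rfl⟩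
    rw [mem_shadow_iff] at he
    obtain ⟨s, hs, y, hy, rfl⟩ := he
    have hxs' : x ∉ s := not_mem_of_mem_flink hs
    have hxy : x ≠ y := fun h => hxs' (h ▸ hy)
    constructor
    · rw [mem_shadow_iff]
      refine ⟨insert x s, insert_mem_of_mem_flink hs, y, ?_, ?_⟩
      · exact mem_insert_of_mem hy
      · ext z
        simp only [mem_insert, mem_erase]
        constructor
        · rintro ⟨hzy, (rfl | hzs)⟩
          · exact Or.inl rfl
          · exact Or.inr ⟨hzy, hzs⟩
        · rintro (rfl | ⟨hzy, hzs⟩)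
          · exact ⟨hxy, Or.inl rfl⟩
          · exact ⟨hzy, Or.inr hzs⟩
    · exact mem_insert_self _ _

lemma shadow_filter_not_mem (𝒜 : Finset (Finset α)) (x : α) :
    {t ∈ ∂ 𝒜 | x ∉ t} = flink 𝒜 x ∪ ∂ (fdel 𝒜 x) := by
  ext t
  simp only [mem_filter, mem_union]
  constructor
  · rintro ⟨ht, hxt⟩
    rw [mem_shadow_iff] at ht
    obtain ⟨s, hs, y, hy, rfl⟩ := ht
    by_cases hxs : x ∈ s
    · left
      have : y = x := by
        by_contra h
        exact hxt (mem_erase.2 ⟨fun hh => h hh.symm, hxs⟩)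
      subst this
      exact mem_flink.2 ⟨s, hs, hxs, rfl⟩
    · right
      rw [mem_shadow_iff]
      exact ⟨s, by rw [fdel, mem_filter]; exact ⟨hs, hxs⟩, y, hy, rfl⟩
  · rintro (ht | ht)
    · obtain ⟨a, ha, hxa, rfl⟩ := mem_flink.1 ht
      exact ⟨erase_mem_shadow ha hxa, notMem_erase _ _⟩
    · rw [mem_shadow_iff] at ht
      obtain ⟨s, hs, y, hy, rfl⟩ := ht
      rw [fdel, mem_filter] at hs
      exact ⟨erase_mem_shadow hs.1 hy, fun h => hs.2 (mem_of_mem_erase h)⟩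

lemma card_shadow_eq_link_del (𝒜 : Finset (Finset α)) (x : α) :
    #(∂ 𝒜) = #(∂ (flink 𝒜 x)) + #(flink 𝒜 x ∪ ∂ (fdel 𝒜 x)) := by
  rw [← card_filter_add_card_filter_not (s := ∂ 𝒜) (p := fun t => x ∈ t),
    shadow_filter_mem, shadow_filter_not_mem, card_image_of_injOn]
  intro a ha b hb hab
  have hxa : x ∉ a := by
    rw [mem_coe, mem_shadow_iff] at ha
    obtain ⟨s, hs, y, hy, rfl⟩ := ha
    exact fun hx => not_mem_of_mem_flink hs (mem_of_mem_erase hx)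
  have hxb : x ∉ b := by
    rw [mem_coe, mem_shadow_iff] at hb
    obtain ⟨s, hs, y, hy, rfl⟩ := hb
    exact fun hx => not_mem_of_mem_flink hs (mem_of_mem_erase hx)
  have hab' : insert x a = insert x b := hab
  rw [← erase_insert hxa, hab', erase_insert hxb]



lemma shadow_inter_nonempty {ρ : ℕ} (hρ : 1 ≤ ρ) {M : Finset α} {𝒦 𝒩 : Finset (Finset α)}
    (hU : 𝒦 ∪ 𝒩 = M.powersetCard ρ) (hK : 𝒦.Nonempty) (hN : 𝒩.Nonempty) :
    (∂ 𝒦 ∩ ∂ 𝒩).Nonempty := by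
  have hmem : ∀ K ∈ 𝒦, K ⊆ M ∧ #K = ρ := by
    intro K hKm
    have : K ∈ M.powersetCard ρ := hU ▸ mem_union_left _ hKm
    exact mem_powersetCard.1 this
  have hmemN : ∀ K ∈ 𝒩, K ⊆ M ∧ #K = ρ := by
    intro K hKm
    have : K ∈ M.powersetCard ρ := hU ▸ mem_union_right _ hKm
    exact mem_powersetCard.1 this
  have aux : ∀ t : ℕ, ∀ K N : Finset α, K ∈ 𝒦 → N ∈ 𝒩 → ρ - #(K ∩ N) ≤ t →
      (∂ 𝒦 ∩ ∂ 𝒩).Nonempty := by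
    intro t
    induction t with
    | zero =>
      intro K N hKm hNm hgap
      -- K = N
      have hKc := (hmem K hKm).2
      have hNc := (hmemN N hNm).2
      have hsub : K ⊆ N := by
        have h1 : #(K ∩ N) ≤ #K := card_le_card inter_subset_left
        have h2 : K ∩ N = K := eq_of_subset_of_card_le inter_subset_left (by omega)
        exact h2 ▸ inter_subset_right
      have hKN : K = N := eq_of_subset_of_card_le hsub (by omega)
      obtain ⟨x, hx⟩ : K.Nonempty := card_pos.1 (by omega)
      refine ⟨K.erase x, mem_inter.2 ⟨erase_mem_shadow hKm hx, ?_⟩⟩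
      rw [hKN]
      exact erase_mem_shadow hNm (hKN ▸ hx)
    | succ t ih =>
      intro K N hKm hNm hgap
      obtain ⟨hKM, hKc⟩ := hmem K hKm
      obtain ⟨hNM, hNc⟩ := hmemN N hNm
      by_cases h0 : ρ - #(K ∩ N) ≤ t
      · exact ih K N hKm hNm h0
      by_cases h1 : #(K ∩ N) = ρ - 1
      · -- common shadow element K ∩ N
        refine ⟨K ∩ N, mem_inter.2 ⟨?_, ?_⟩⟩
        · rw [mem_shadow_iff_exists_sdiff]
          refine ⟨K, hKm, inter_subset_left, ?_⟩
          have := card_sdiff_add_card_eq_card (inter_subset_left : K ∩ N ⊆ K)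
          omega
        · rw [mem_shadow_iff_exists_sdiff]
          refine ⟨N, hNm, inter_subset_right, ?_⟩
          have := card_sdiff_add_card_eq_card (inter_subset_right : K ∩ N ⊆ N)
          omega
      · -- swap an element
        have hlt : #(K ∩ N) < ρ - 1 := by
          have : #(K ∩ N) ≤ #K := card_le_card inter_subset_left
          omega
        obtain ⟨a, ha⟩ : (K \ N).Nonempty := by
          rw [sdiff_nonempty]
          intro hsub
          have h2 : K ∩ N = K := by rw [inter_eq_left]; exact hsub
          rw [h2] at hlt
          omega
        obtain ⟨b, hb⟩ : (N \ K).Nonempty := by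
          rw [sdiff_nonempty]
          intro hsub
          have h2 : K ∩ N = N := by rw [inter_eq_right]; exact hsub
          rw [h2] at hlt
          omega
        rw [mem_sdiff] at ha hb
        set K' := insert b (K.erase a) with hK'
        have hbK : b ∉ K.erase a := fun h => hb.2 (mem_of_mem_erase h)
        have hK'c : #K' = ρ := by
          rw [hK', card_insert_of_notMem hbK, card_erase_of_mem ha.1]
          omega
        have hK'M : K' ⊆ M := by
          intro z hz
          rw [hK', mem_insert] at hz
          rcases hz with rfl | hz
          · exact hNM hb.1
          · exact hKM (mem_of_mem_erase hz)
        have hK'mem : K' ∈ 𝒦 ∪ 𝒩 := hU ▸ mem_powersetCard.2 ⟨hK'M, hK'c⟩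
        rcases mem_union.1 hK'mem with hK'K | hK'N
        · -- (K', N) has bigger intersection
          refine ih K' N hK'K hNm ?_
          have hsub : insert b (K ∩ N) ⊆ K' ∩ N := by
            intro z hz
            rw [mem_insert] at hz
            rw [mem_inter]
            rcases hz with rfl | hz
            · exact ⟨mem_insert_self _ _, hb.1⟩
            · rw [mem_inter] at hz
              refine ⟨mem_insert_of_mem (mem_erase.2 ⟨?_, hz.1⟩), hz.2⟩
              rintro rfl
              exact ha.2 hz.2
          have hbKN : b ∉ K ∩ N := fun h => hb.2 (mem_inter.1 h).1
          have := card_le_card hsub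
          rw [card_insert_of_notMem hbKN] at this
          omega
        · -- (K, K') intersect in ρ - 1
          refine ih K K' hKm hK'N ?_
          have : K ∩ K' = K.erase a := by
            ext z
            rw [mem_inter, hK', mem_insert, mem_erase]
            constructor
            · rintro ⟨hzK, rfl | hz⟩
              · exact absurd hzK hb.2
              · exact hz
            · rintro ⟨hza, hzK⟩
              exact ⟨hzK, Or.inr ⟨hza, hzK⟩⟩
          rw [this, card_erase_of_mem ha.1]
          omega
  obtain ⟨K, hKm⟩ := hK
  obtain ⟨N, hNm⟩ := hN
  exact aux ρ K N hKm hNm (by omega)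


end general

section finN
variable {N : ℕ}


/-- weight of a family, strictly decreasing under nontrivial down-compressions -/
def fmu (𝒜 : Finset (Finset (Fin N))) : ℕ := ∑ a ∈ 𝒜, ∑ x ∈ a, (x : ℕ)

lemma compress_singleton {u v : Fin N} (huv : u ≠ v) {a : Finset (Fin N)}
    (hva : v ∈ a) (hua : u ∉ a) :
    UV.compress {u} {v} a = insert u (a.erase v) := by
  rw [UV.compress, if_pos ⟨by simpa using hua, by simpa using hva⟩]
  ext z
  simp only [sup_eq_union, sdiff_singleton_eq_erase, mem_erase, mem_union, mem_singleton,
    mem_insert]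
  constructor
  · rintro ⟨hzv, hz | rfl⟩
    · exact Or.inr ⟨hzv, hz⟩
    · exact Or.inl rfl
  · rintro (rfl | ⟨hzv, hz⟩)
    · exact ⟨huv, Or.inr rfl⟩
    · exact ⟨hzv, Or.inl hz⟩

lemma compress_moves {u v : Fin N} {a : Finset (Fin N)} (h : UV.compress {u} {v} a ≠ a) :
    v ∈ a ∧ u ∉ a := by
  rw [UV.compress] at h
  split_ifs at h with hc
  · obtain ⟨h1, h2⟩ := hc
    rw [disjoint_singleton_left] at h1
    exact ⟨by simpa using h2, h1⟩
  · exact absurd rfl h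

lemma fmu_compression_lt {u v : Fin N} (huv : u < v) {𝒜 : Finset (Finset (Fin N))}
    (hne : 𝓒 {u} {v} 𝒜 ≠ 𝒜) : fmu (𝓒 {u} {v} 𝒜) < fmu 𝒜 := by
  classical
  set c := UV.compress ({u} : Finset (Fin N)) {v} with hc
  set kept := {a ∈ 𝒜 | c a ∈ 𝒜} with hkept
  set ms := {a ∈ 𝒜 | c a ∉ 𝒜} with hms
  have hpart : kept ∪ ms = 𝒜 := by
    rw [hkept, hms]
    rw [filter_union_filter_not_eq]
  have hcomp : 𝓒 {u} {v} 𝒜 = kept ∪ ms.image c := by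
    rw [UV.compression]
    congr 1
    ext b
    simp only [mem_filter, mem_image, hms]
    constructor
    · rintro ⟨⟨a, ha, rfl⟩, hb⟩
      exact ⟨a, ⟨ha, hb⟩, rfl⟩
    · rintro ⟨a, ⟨ha, hca⟩, rfl⟩
      exact ⟨⟨a, ha, rfl⟩, hca⟩
  have hmsne : ms.Nonempty := by
    rw [nonempty_iff_ne_empty]
    intro hemp
    apply hne
    have hkful : kept = 𝒜 := by
      rw [← hpart, hemp, union_empty]
    rw [hcomp, hemp, image_empty, union_empty, hkful]
  have hdisj : Disjoint kept (ms.image c) := by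
    rw [disjoint_left]
    intro b hb hb'
    obtain ⟨a, ha, rfl⟩ := mem_image.1 hb'
    exact (mem_filter.1 ha).2 (mem_filter.1 hb).1
  have hinj : Set.InjOn c ms := by
    rw [hms]
    exact UV.compress_injOn
  have hkey : ∀ a ∈ ms, ∑ x ∈ c a, (x : ℕ) < ∑ x ∈ a, (x : ℕ) := by
    intro a ha
    rw [hms, mem_filter] at ha
    have hca : c a ≠ a := fun h => ha.2 (by rw [h]; exact ha.1)
    obtain ⟨hva, hua⟩ := compress_moves hca
    rw [hc, compress_singleton huv.ne hva hua]
    have huev : u ∉ a.erase v := fun h => hua (mem_of_mem_erase h)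
    rw [sum_insert huev, ← add_sum_erase _ _ hva]
    have : (u : ℕ) < (v : ℕ) := huv
    omega
  have hsum : fmu (𝓒 {u} {v} 𝒜) = ∑ a ∈ kept, ∑ x ∈ a, (x : ℕ)
      + ∑ a ∈ ms, ∑ x ∈ c a, (x : ℕ) := by
    rw [fmu, hcomp, sum_union hdisj, sum_image (fun a ha b hb => hinj ha hb)]
  have hsum2 : fmu 𝒜 = ∑ a ∈ kept, ∑ x ∈ a, (x : ℕ) + ∑ a ∈ ms, ∑ x ∈ a, (x : ℕ) := by
    rw [fmu, ← hpart, sum_union]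
    rw [hkept, hms]
    exact disjoint_filter_filter_not 𝒜 𝒜 _
  rw [hsum, hsum2]
  have := sum_lt_sum_of_nonempty hmsne hkey
  omega


lemma strictKK {ρ c : ℕ} (h2 : 2 ≤ ρ) (hρc : ρ ≤ c) (hcN : c < N)
    {𝒜 : Finset (Finset (Fin N))} (hsized : (𝒜 : Set (Finset (Fin N))).Sized ρ)
    (hcard : c.choose ρ < #𝒜) : c.choose (ρ - 1) < #(∂ 𝒜) := by
  set c₀ : Fin N := ⟨c, hcN⟩ with hc₀
  set M : Finset (Fin N) := attachFin (range c) (fun m hm => lt_trans (mem_range.1 hm) hcN)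
    with hM
  have hMcard : #M = c := by rw [hM, card_attachFin, card_range]
  have hMmem : ∀ x : Fin N, x ∈ M ↔ (x : ℕ) < c := by
    intro x; rw [hM, mem_attachFin, mem_range]
  set T₀ : Finset (Fin N) := attachFin (range (ρ - 1))
    (fun m hm => lt_trans (mem_range.1 hm) (lt_of_lt_of_le (by omega) (le_of_lt hcN))) with hT₀
  have hT₀card : #T₀ = ρ - 1 := by rw [hT₀, card_attachFin, card_range]
  have hT₀mem : ∀ x : Fin N, x ∈ T₀ ↔ (x : ℕ) < ρ - 1 := by
    intro x; rw [hT₀, mem_attachFin, mem_range]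
  have hc₀T₀ : c₀ ∉ T₀ := by rw [hT₀mem]; simp [hc₀]; omega
  set T : Finset (Fin N) := insert c₀ T₀ with hT
  have hTcard : #T = ρ := by rw [hT, card_insert_of_notMem hc₀T₀, hT₀card]; omega
  have hTM : T ∉ M.powersetCard ρ := by
    rw [mem_powersetCard]
    rintro ⟨hsub, -⟩
    have := (hMmem c₀).1 (hsub (mem_insert_self _ _))
    simp [hc₀] at this
  set 𝒞 : Finset (Finset (Fin N)) := insert T (M.powersetCard ρ) with h𝒞
  have h𝒞card : #𝒞 = c.choose ρ + 1 := by
    rw [h𝒞, card_insert_of_notMem hTM, card_powersetCard, hMcard]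
  have h𝒞init : Finset.Colex.IsInitSeg 𝒞 ρ := by
    constructor
    · intro s hs
      rw [mem_coe, h𝒞, mem_insert] at hs
      rcases hs with rfl | hs
      · exact hTcard
      · exact (mem_powersetCard.1 hs).2
    · rintro s t hs ⟨hts, htc⟩
      rw [h𝒞, mem_insert] at hs ⊢
      rcases hs with rfl | hs
      · -- s = T
        have hTle : ∀ b ∈ T, b ≤ c₀ := by
          intro b hb
          rw [hT, mem_insert] at hb
          rcases hb with rfl | hb
          · exact le_refl _
          · have := (hT₀mem b).1 hb
            exact le_of_lt (by rw [Fin.lt_def]; simp [hc₀]; omega)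
        have htle : ∀ b ∈ t, b ≤ c₀ := Colex.forall_le_mono hts.le hTle
        by_cases hct : c₀ ∈ t
        · exfalso
          have htT : t ⊆ T := by
            intro x hx
            by_contra hxT
            obtain ⟨-, hlt⟩ := Colex.toColex_lt_toColex.1 hts
            obtain ⟨b, hbT, hbt, hxb⟩ := hlt hx hxT
            have hbc : b ≠ c₀ := fun h => hbt (h ▸ hct)
            have hbT₀ : b ∈ T₀ := by
              rw [hT, mem_insert] at hbT
              tauto
            have hxc : x ≠ c₀ := fun h => hxT (h ▸ mem_insert_self c₀ T₀)
            -- x ∉ T means x ∉ T₀ and x ≠ c₀, so (x:ℕ) ≥ ρ - 1 > (b:ℕ) ≥ (x:ℕ)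
            have hxT₀ : x ∉ T₀ := fun h => hxT (hT ▸ mem_insert_of_mem h)
            have h1 : ¬ (x : ℕ) < ρ - 1 := fun h => hxT₀ ((hT₀mem x).2 h)
            have h2 : (b : ℕ) < ρ - 1 := (hT₀mem b).1 hbT₀
            have h3 : (x : ℕ) ≤ (b : ℕ) := hxb
            omega
          have : t = T := eq_of_subset_of_card_le htT (by omega)
          rw [this] at hts
          exact lt_irrefl _ hts
        · right
          rw [mem_powersetCard]
          refine ⟨?_, htc⟩
          intro x hx
          rw [hMmem]
          have h1 : x ≤ c₀ := htle x hx
          have h2 : x ≠ c₀ := fun h => hct (h ▸ hx)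
          have := lt_of_le_of_ne h1 h2
          rw [Fin.lt_def] at this
          simpa [hc₀] using this
      · -- s ⊆ M
        right
        rw [mem_powersetCard] at hs ⊢
        refine ⟨?_, htc⟩
        have hslt : ∀ b ∈ s, b < c₀ := by
          intro b hb
          have := (hMmem b).1 (hs.1 hb)
          rw [Fin.lt_def]
          simpa [hc₀] using this
        have := Colex.forall_lt_mono hts.le hslt
        intro x hx
        rw [hMmem]
        have := this x hx
        rw [Fin.lt_def] at this
        simpa [hc₀] using this
  -- the shadow of 𝒞 is large
  obtain ⟨x₀, hx₀⟩ : T₀.Nonempty := card_pos.1 (by omega)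
  have hsub : insert (T.erase x₀) (M.powersetCard (ρ - 1)) ⊆ ∂ 𝒞 := by
    intro t ht
    rw [mem_insert] at ht
    rcases ht with rfl | ht
    · exact erase_mem_shadow (by rw [h𝒞]; exact mem_insert_self _ _)
        (hT ▸ mem_insert_of_mem hx₀)
    · have : ∂ (M.powersetCard ρ) = M.powersetCard (ρ - 1) :=
        shadow_powersetCard (by omega) (by omega)
      rw [← this] at ht
      exact shadow_mono (by rw [h𝒞]; exact subset_insert _ _) ht
  have hx₀T : x₀ ∈ T := hT ▸ mem_insert_of_mem hx₀
  have hc₀x₀ : c₀ ∈ T.erase x₀ := by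
    rw [mem_erase]
    refine ⟨fun h => hc₀T₀ (h ▸ hx₀), hT ▸ mem_insert_self _ _⟩
  have hTe : T.erase x₀ ∉ M.powersetCard (ρ - 1) := by
    rw [mem_powersetCard]
    rintro ⟨hsub', -⟩
    have := (hMmem c₀).1 (hsub' hc₀x₀)
    simp [hc₀] at this
  have hcard𝒞 : c.choose (ρ - 1) + 1 ≤ #(∂ 𝒞) := by
    calc c.choose (ρ - 1) + 1 = #(insert (T.erase x₀) (M.powersetCard (ρ - 1))) := by
          rw [card_insert_of_notMem hTe, card_powersetCard, hMcard]
      _ ≤ #(∂ 𝒞) := card_le_card hsub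
  have hkk : #(∂ 𝒞) ≤ #(∂ 𝒜) := by
    have := Finset.kruskal_katona hsized (by omega : #𝒞 ≤ #𝒜) h𝒞init
    convert this using 4
  omega


lemma lovasz1 {r m : ℕ} (hr : 1 ≤ r) (hrm : r ≤ m) (hmN : m ≤ N)
    {𝒜 : Finset (Finset (Fin N))} (hsized : (𝒜 : Set (Finset (Fin N))).Sized r)
    (h : m.choose r ≤ #𝒜) : m.choose (r - 1) ≤ #(∂ 𝒜) := by
  have := Finset.kruskal_katona_lovasz_form (i := 1) hr hrm hmN hsized h
  rw [Function.iterate_one] at this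
  convert this using 4

lemma lovaszIter {i r m : ℕ} (hir : i ≤ r) (hrm : r ≤ m) (hmN : m ≤ N)
    {𝒜 : Finset (Finset (Fin N))} (hsized : (𝒜 : Set (Finset (Fin N))).Sized r)
    (h : m.choose r ≤ #𝒜) : m.choose (r - i) ≤ #(∂^[i] 𝒜) := by
  have := Finset.kruskal_katona_lovasz_form (i := i) hir hrm hmN hsized h
  convert this using 4

lemma iterStrict {c : ℕ} (hcN : c < N) :
    ∀ j ρ : ℕ, j + 1 ≤ ρ → ρ ≤ c → ∀ 𝒜 : Finset (Finset (Fin N)),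
    (𝒜 : Set (Finset (Fin N))).Sized ρ → c.choose ρ < #𝒜 → c.choose (ρ - j) < #(∂^[j] 𝒜) := by
  intro j
  induction j with
  | zero => intro ρ _ _ 𝒜 _ h; simpa using h
  | succ j ih =>
    intro ρ hjρ hρc 𝒜 hsized h
    rw [Function.iterate_succ_apply]
    have h1 : c.choose (ρ - 1) < #(∂ 𝒜) := strictKK (by omega) hρc hcN hsized h
    have h2 := ih (ρ - 1) (by omega) (by omega) (∂ 𝒜) hsized.shadow h1
    have : ρ - 1 - j = ρ - (j + 1) := by omega
    rwa [this] at h2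


end finN

section general2
variable {α : Type*} [DecidableEq α]

lemma uncompress {u v : α} (huv : u ≠ v) {r m : ℕ} (hr : 2 ≤ r) (hrm : r < m)
    {W : Finset α} (hW : #W = m) {𝒜 : Finset (Finset α)}
    (hc : 𝓒 {u} {v} 𝒜 = W.powersetCard r)
    (hs : #(∂ 𝒜) ≤ m.choose (r - 1)) :
    ∃ W' : Finset α, #W' = m ∧ 𝒜 = W'.powersetCard r := by
  have hcard𝒜 : #𝒜 = m.choose r := by
    rw [← UV.card_compression {u} {v} 𝒜, hc, card_powersetCard, hW]
  set H : Finset (Finset α) := (W.powersetCard r) \ 𝒜 with hH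
  by_cases hHe : H = ∅
  · have hsub : W.powersetCard r ⊆ 𝒜 := by
      rwa [hH, sdiff_eq_empty_iff_subset] at hHe
    refine ⟨W, hW, (eq_of_subset_of_card_le hsub ?_).symm⟩
    rw [hcard𝒜, card_powersetCard, hW]
  -- key facts about moved sets
  have key : ∀ w ∈ H, u ∈ w ∧ v ∉ w ∧ insert v (w.erase u) ∈ 𝒜 ∧
      insert v (w.erase u) ∉ W.powersetCard r := by
    intro w hw
    rw [hH, mem_sdiff] at hw
    obtain ⟨hwP, hw𝒜⟩ := hw
    have hw𝓒 : w ∈ 𝓒 {u} {v} 𝒜 := hc ▸ hwP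
    have hu : u ∈ w := by
      have := UV.le_of_mem_compression_of_notMem hw𝓒 hw𝒜
      exact singleton_subset_iff.1 this
    have hv : v ∉ w := by
      have := UV.disjoint_of_mem_compression_of_notMem hw𝓒 hw𝒜
      rw [disjoint_singleton_left] at this
      exact this
    have h3 : insert v (w.erase u) ∈ 𝒜 := by
      have := UV.sup_sdiff_mem_of_mem_compression_of_notMem hw𝓒 hw𝒜
      have heq : (w ⊔ {v}) \ {u} = insert v (w.erase u) := by
        ext z
        simp only [sup_eq_union, sdiff_singleton_eq_erase, mem_erase, mem_union, mem_singleton,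
          mem_insert]
        constructor
        · rintro ⟨hzu, hz | rfl⟩
          · exact Or.inr ⟨hzu, hz⟩
          · exact Or.inl rfl
        · rintro (rfl | ⟨hzu, hz⟩)
          · exact ⟨fun h => huv h.symm, Or.inr rfl⟩
          · exact ⟨hzu, Or.inl hz⟩
      rwa [heq] at this
    refine ⟨hu, hv, h3, ?_⟩
    -- insert v (w.erase u) is not in 𝓒 𝒜 = P r W
    rw [← hc]
    intro hmem
    have hucomp : UV.compress {u} {v} (insert v (w.erase u)) = w := by
      rw [UV.compress, if_pos]
      · ext z
        simp only [sup_eq_union, sdiff_singleton_eq_erase, mem_erase, mem_union, mem_insert,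
          mem_singleton]
        constructor
        · rintro ⟨hzv, (rfl | ⟨hzu, hz⟩) | rfl⟩
          · exact absurd rfl hzv
          · exact hz
          · exact hu
        · intro hz
          by_cases hzu : z = u
          · exact ⟨fun h => hv (h ▸ hz), Or.inr hzu⟩
          · exact ⟨fun h => hv (h ▸ hz), Or.inl (Or.inr ⟨hzu, hz⟩)⟩
      · constructor
        · rw [disjoint_singleton_left, mem_insert]
          rintro (rfl | h)
          · exact huv rfl
          · exact (notMem_erase u w) h
        · simp
    rcases UV.mem_compression.1 hmem with ⟨-, hcomp⟩ | ⟨hnot, -⟩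
    · rw [hucomp] at hcomp
      exact hw𝒜 hcomp
    · exact hnot h3
  obtain ⟨w₀, hw₀⟩ := nonempty_iff_ne_empty.2 hHe
  have hw₀P : w₀ ∈ W.powersetCard r := (mem_sdiff.1 (hH ▸ hw₀)).1
  have huW : u ∈ W := (mem_powersetCard.1 hw₀P).1 (key w₀ hw₀).1
  have hvW : v ∉ W := by
    intro hvW
    obtain ⟨hu₀, hv₀, h3₀, h4₀⟩ := key w₀ hw₀
    apply h4₀
    rw [mem_powersetCard]
    constructor
    · intro z hz
      rw [mem_insert] at hz
      rcases hz with rfl | hz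
      · exact hvW
      · exact (mem_powersetCard.1 hw₀P).1 (mem_of_mem_erase hz)
    · rw [card_insert_of_notMem (fun h => hv₀ (mem_of_mem_erase h)),
        card_erase_of_mem hu₀, (mem_powersetCard.1 hw₀P).2]
      omega
  set M : Finset α := W.erase u with hM
  have hMcard : #M = m - 1 := by rw [hM, card_erase_of_mem huW, hW]
  have hvM : v ∉ M := fun h => hvW (mem_of_mem_erase h)
  have huM : u ∉ M := notMem_erase _ _
  set K : Finset (Finset α) := H.image (fun w => w.erase u) with hK
  have hKP : K ⊆ M.powersetCard (r - 1) := by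
    intro e he
    obtain ⟨w, hw, rfl⟩ := mem_image.1 he
    have hwP := (mem_sdiff.1 (hH ▸ hw)).1
    rw [mem_powersetCard] at hwP ⊢
    constructor
    · intro z hz
      rw [mem_erase] at hz
      rw [hM, mem_erase]
      exact ⟨hz.1, hwP.1 hz.2⟩
    · rw [card_erase_of_mem (key w hw).1, hwP.2]
  have hKne : K.Nonempty := ⟨w₀.erase u, mem_image.2 ⟨w₀, hw₀, rfl⟩⟩
  have hKinj : Set.InjOn (fun w : Finset α => w.erase u) ↑H := by
    intro a ha b hb hab
    rw [mem_coe] at ha hb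
    have ha' : a.erase u = b.erase u := hab
    rw [← insert_erase (key a ha).1, ha', insert_erase (key b hb).1]
  have hKcard : #K = #H := card_image_of_injOn hKinj
  set Q : Finset (Finset α) := (M.powersetCard (r - 1)) \ K with hQ
  by_cases hQe : Q = ∅
  · -- H consists of all r-subsets of W containing u; 𝒜 is the clique on insert v M
    have hKfull : K = M.powersetCard (r - 1) := by
      apply Subset.antisymm hKP
      rw [hQ, sdiff_eq_empty_iff_subset] at hQe
      exact hQe
    -- H = all r-subsets of W containing u
    have hHfull : H = {w ∈ W.powersetCard r | u ∈ w} := by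
      apply Subset.antisymm
      · intro w hw
        rw [mem_filter]
        exact ⟨(mem_sdiff.1 (hH ▸ hw)).1, (key w hw).1⟩
      · intro w hw
        rw [mem_filter] at hw
        obtain ⟨hwP, hwu⟩ := hw
        have : w.erase u ∈ K := by
          rw [hKfull, mem_powersetCard]
          rw [mem_powersetCard] at hwP
          constructor
          · intro z hz
            rw [mem_erase] at hz
            rw [hM, mem_erase]
            exact ⟨hz.1, hwP.1 hz.2⟩
          · rw [card_erase_of_mem hwu, hwP.2]
        obtain ⟨w', hw', hww'⟩ := mem_image.1 this
        have : w' = w := by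
          rw [← insert_erase (key w' hw').1, hww', insert_erase hwu]
        exact this ▸ hw'
    set W' : Finset α := insert v M with hW'
    have hW'card : #W' = m := by
      rw [hW', card_insert_of_notMem hvM, hMcard]
      omega
    set G : Finset (Finset α) := W.powersetCard r \ H with hG
    have hGsub : G ⊆ 𝒜 := by
      intro w hw
      rw [hG, mem_sdiff, hH, mem_sdiff] at hw
      by_contra hw𝒜
      exact hw.2 ⟨hw.1, hw𝒜⟩
    have hGeq : G = M.powersetCard r := by
      ext w
      rw [hG, mem_sdiff, hHfull, mem_filter, mem_powersetCard, mem_powersetCard]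
      constructor
      · rintro ⟨⟨hwW, hwc⟩, hnot⟩
        have hwu : u ∉ w := fun h => hnot ⟨⟨hwW, hwc⟩, h⟩
        exact ⟨fun z hz => mem_erase.2 ⟨fun hzz => hwu (hzz ▸ hz), hwW hz⟩, hwc⟩
      · rintro ⟨hwM, hwc⟩
        have hwW : w ⊆ W := fun z hz => mem_of_mem_erase (hwM hz)
        have hwu : u ∉ w := fun h => (notMem_erase u W) (hwM h)
        exact ⟨⟨hwW, hwc⟩, fun h => hwu h.2⟩
    set Hq : Finset (Finset α) := H.image (fun w => insert v (w.erase u)) with hHq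
    have hHqsub : Hq ⊆ 𝒜 := by
      intro q hq
      obtain ⟨w, hw, rfl⟩ := mem_image.1 hq
      exact (key w hw).2.2.1
    have hHqinj : Set.InjOn (fun w : Finset α => insert v (w.erase u)) ↑H := by
      intro a ha b hb hab
      rw [mem_coe] at ha hb
      have h1 : insert v (a.erase u) = insert v (b.erase u) := hab
      have h2 : a.erase u = b.erase u := by
        have hva : v ∉ a.erase u := fun h => (key a ha).2.1 (mem_of_mem_erase h)
        have hvb : v ∉ b.erase u := fun h => (key b hb).2.1 (mem_of_mem_erase h)
        rw [← erase_insert hva, h1, erase_insert hvb]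
      rw [← insert_erase (key a ha).1, h2, insert_erase (key b hb).1]
    have hHqcard : #Hq = #H := card_image_of_injOn hHqinj
    have hGHdisj : Disjoint G Hq := by
      rw [disjoint_left]
      intro q hqG hqH
      obtain ⟨w, hw, rfl⟩ := mem_image.1 hqH
      rw [hGeq, mem_powersetCard] at hqG
      exact hvM (hqG.1 (mem_insert_self _ _))
    have hHcard : #H = (m - 1).choose (r - 1) := by
      rw [← hKcard, hKfull, card_powersetCard, hMcard]
    have hGcard : #G = (m - 1).choose r := by
      rw [hGeq, card_powersetCard, hMcard]
    have hpascal : m.choose r = (m - 1).choose (r - 1) + (m - 1).choose r := by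
      have h1 : m = (m - 1) + 1 := by omega
      have h2 : r = (r - 1) + 1 := by omega
      rw [h1, h2, Nat.choose_succ_succ]
      congr 1 <;> rw [← h2]
    have h𝒜eq : 𝒜 = G ∪ Hq := by
      apply (eq_of_subset_of_card_le (union_subset hGsub hHqsub) _).symm
      rw [card_union_of_disjoint hGHdisj, hGcard, hHqcard, hHcard, hcard𝒜, hpascal]
      omega
    refine ⟨W', hW'card, ?_⟩
    rw [h𝒜eq]
    ext b
    rw [mem_union, mem_powersetCard]
    constructor
    · rintro (hb | hb)
      · rw [hGeq, mem_powersetCard] at hb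
        exact ⟨fun z hz => by rw [hW']; exact mem_insert_of_mem (hb.1 hz), hb.2⟩
      · obtain ⟨w, hw, rfl⟩ := mem_image.1 hb
        have hwP := (mem_sdiff.1 (hH ▸ hw)).1
        rw [mem_powersetCard] at hwP
        constructor
        · intro z hz
          rw [mem_insert] at hz
          rw [hW', mem_insert]
          rcases hz with rfl | hz
          · exact Or.inl rfl
          · right
            rw [hM, mem_erase]
            exact ⟨(mem_erase.1 hz).1, hwP.1 (mem_of_mem_erase hz)⟩
        · rw [card_insert_of_notMem (fun h => (key w hw).2.1 (mem_of_mem_erase h)),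
            card_erase_of_mem (key w hw).1, hwP.2]
          omega
    · rintro ⟨hbW', hbc⟩
      by_cases hvb : v ∈ b
      · right
        have hbe : b.erase v ∈ K := by
          rw [hKfull, mem_powersetCard]
          constructor
          · intro z hz
            have := hbW' (mem_of_mem_erase hz)
            rw [hW', mem_insert] at this
            rcases this with rfl | h
            · exact absurd rfl (mem_erase.1 hz).1
            · exact h
          · rw [card_erase_of_mem hvb, hbc]
        obtain ⟨w, hw, hwe⟩ := mem_image.1 hbe
        refine mem_image.2 ⟨w, hw, ?_⟩
        have : insert v (w.erase u) = insert v (b.erase v) := by rw [hwe]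
        rw [this, insert_erase hvb]
      · left
        rw [hGeq, mem_powersetCard]
        refine ⟨?_, hbc⟩
        intro z hz
        have := hbW' hz
        rw [hW', mem_insert] at this
        rcases this with rfl | h
        · exact absurd hz hvb
        · exact h
  · -- contradiction case
    exfalso
    have hQne : Q.Nonempty := nonempty_iff_ne_empty.2 hQe
    -- three disjoint pieces inside the shadow of 𝒜
    have hrm1 : r ≤ m - 1 := by omega
    have P1 : M.powersetCard (r - 1) ⊆ ∂ 𝒜 := by
      intro d hd
      rw [mem_powersetCard] at hd
      obtain ⟨s, hds, hsM, hsc⟩ := exists_subsuperset_card_eq hd.1 (by omega : #d ≤ r)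
        (by omega : r ≤ #M)
      have hs𝒜 : s ∈ 𝒜 := by
        have hsP : s ∈ W.powersetCard r :=
          mem_powersetCard.2 ⟨fun z hz => mem_of_mem_erase (hsM hz), hsc⟩
        by_contra hsn
        have : s ∈ H := mem_sdiff.2 ⟨hsP, hsn⟩
        exact (notMem_erase u W) (hsM ((key s this).1))
      rw [mem_shadow_iff_exists_sdiff]
      refine ⟨s, hs𝒜, hds, ?_⟩
      have := card_sdiff_add_card_eq_card hds
      omega
    have P2 : (∂ Q).image (insert u) ⊆ ∂ 𝒜 := by
      intro e' he'
      obtain ⟨e, he, rfl⟩ := mem_image.1 he'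
      rw [mem_shadow_iff_exists_sdiff] at he
      obtain ⟨nn, hnn, henn, hcnn⟩ := he
      rw [hQ, mem_sdiff] at hnn
      obtain ⟨hnnP, hnnK⟩ := hnn
      rw [mem_powersetCard] at hnnP
      have hs𝒜 : insert u nn ∈ 𝒜 := by
        have hsP : insert u nn ∈ W.powersetCard r := by
          rw [mem_powersetCard]
          constructor
          · intro z hz
            rw [mem_insert] at hz
            rcases hz with rfl | hz
            · exact huW
            · exact mem_of_mem_erase (hnnP.1 hz)
          · rw [card_insert_of_notMem (fun h => huM (hnnP.1 h)), hnnP.2]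
            omega
        by_contra hsn
        have hsH : insert u nn ∈ H := mem_sdiff.2 ⟨hsP, hsn⟩
        apply hnnK
        refine mem_image.2 ⟨insert u nn, hsH, ?_⟩
        exact erase_insert (fun h => huM (hnnP.1 h))
      rw [mem_shadow_iff_exists_sdiff]
      have hue : u ∉ e := fun h => huM (hnnP.1 (henn h))
      have hunn : u ∉ nn := fun h => huM (hnnP.1 h)
      refine ⟨insert u nn, hs𝒜, insert_subset_insert _ henn, ?_⟩
      have h1 : #(insert u nn) = #nn + 1 := card_insert_of_notMem hunn
      have h2 : #(insert u e) = #e + 1 := card_insert_of_notMem hue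
      have h3 := card_sdiff_add_card_eq_card (insert_subset_insert u henn)
      have h4 := card_sdiff_add_card_eq_card henn
      omega
    have P3 : (∂ K).image (insert v) ⊆ ∂ 𝒜 := by
      intro e' he'
      obtain ⟨e, he, rfl⟩ := mem_image.1 he'
      rw [mem_shadow_iff_exists_sdiff] at he
      obtain ⟨kk, hkk, hekk, hckk⟩ := he
      obtain ⟨w, hw, rfl⟩ := mem_image.1 hkk
      have h𝒜 : insert v (w.erase u) ∈ 𝒜 := (key w hw).2.2.1
      rw [mem_shadow_iff_exists_sdiff]
      have hkkM : w.erase u ⊆ M := by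
        have := hKP (mem_image.2 ⟨w, hw, rfl⟩)
        exact (mem_powersetCard.1 this).1
      have hve : v ∉ e := fun h => hvM (hkkM (hekk h))
      have hvkk : v ∉ w.erase u := fun h => hvM (hkkM h)
      refine ⟨insert v (w.erase u), h𝒜, insert_subset_insert _ hekk, ?_⟩
      have h1 : #(insert v (w.erase u)) = #(w.erase u) + 1 := card_insert_of_notMem hvkk
      have h2 : #(insert v e) = #e + 1 := card_insert_of_notMem hve
      have h3 := card_sdiff_add_card_eq_card (insert_subset_insert v hekk)
      have h4 := card_sdiff_add_card_eq_card hekk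
      omega
    -- shadows of Q and K are of sets inside M
    have hQM : ∀ e ∈ ∂ Q, e ⊆ M ∧ u ∉ e ∧ v ∉ e := by
      intro e he
      rw [mem_shadow_iff_exists_sdiff] at he
      obtain ⟨nn, hnn, henn, -⟩ := he
      rw [hQ, mem_sdiff] at hnn
      have := (mem_powersetCard.1 hnn.1).1
      exact ⟨henn.trans this, fun h => huM (this (henn h)), fun h => hvM (this (henn h))⟩
    have hKM : ∀ e ∈ ∂ K, e ⊆ M ∧ u ∉ e ∧ v ∉ e := by
      intro e he
      rw [mem_shadow_iff_exists_sdiff] at he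
      obtain ⟨kk, hkk, hekk, -⟩ := he
      have := (mem_powersetCard.1 (hKP hkk)).1
      exact ⟨hekk.trans this, fun h => huM (this (hekk h)), fun h => hvM (this (hekk h))⟩
    -- cardinalities
    have hP2card : #((∂ Q).image (insert u)) = #(∂ Q) := by
      apply card_image_of_injOn
      intro a ha b hb hab
      rw [mem_coe] at ha hb
      have h1 : insert u a = insert u b := hab
      rw [← erase_insert (hQM a ha).2.1, h1, erase_insert (hQM b hb).2.1]
    have hP3card : #((∂ K).image (insert v)) = #(∂ K) := by
      apply card_image_of_injOn
      intro a ha b hb hab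
      rw [mem_coe] at ha hb
      have h1 : insert v a = insert v b := hab
      rw [← erase_insert (hKM a ha).2.2, h1, erase_insert (hKM b hb).2.2]
    -- disjointness
    have hd12 : Disjoint (M.powersetCard (r - 1)) ((∂ Q).image (insert u)) := by
      rw [disjoint_left]
      intro e he he'
      obtain ⟨e₀, he₀, rfl⟩ := mem_image.1 he'
      exact huM ((mem_powersetCard.1 he).1 (mem_insert_self _ _))
    have hd13 : Disjoint (M.powersetCard (r - 1)) ((∂ K).image (insert v)) := by
      rw [disjoint_left]
      intro e he he'
      obtain ⟨e₀, he₀, rfl⟩ := mem_image.1 he'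
      exact hvM ((mem_powersetCard.1 he).1 (mem_insert_self _ _))
    have hd23 : Disjoint ((∂ Q).image (insert u)) ((∂ K).image (insert v)) := by
      rw [disjoint_left]
      intro e he he'
      obtain ⟨e₀, he₀, rfl⟩ := mem_image.1 he
      obtain ⟨e₁, he₁, heq⟩ := mem_image.1 he'
      have : v ∈ insert u e₀ := by rw [← heq]; exact mem_insert_self _ _
      rw [mem_insert] at this
      rcases this with h | h
      · exact huv h.symm
      · exact (hQM e₀ he₀).2.2 h
    -- Johnson connectivity
    have hUnion : K ∪ Q = M.powersetCard (r - 1) := by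
      rw [hQ, union_sdiff_of_subset hKP]
    have hJ : (∂ K ∩ ∂ Q).Nonempty :=
      shadow_inter_nonempty (by omega) hUnion hKne hQne
    have hShadowUnion : ∂ K ∪ ∂ Q = M.powersetCard (r - 2) := by
      rw [← shadow_union, hUnion, shadow_powersetCard (by omega) (by omega)]
      congr 1
    have hKQcard : (m - 1).choose (r - 2) + 1 ≤ #(∂ K) + #(∂ Q) := by
      have h1 := card_union_add_card_inter (∂ K) (∂ Q)
      have h2 : #(∂ K ∪ ∂ Q) = (m - 1).choose (r - 2) := by
        rw [hShadowUnion, card_powersetCard, hMcard]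
      have h3 : 1 ≤ #(∂ K ∩ ∂ Q) := card_pos.2 hJ
      omega
    -- total count
    have htot : #(M.powersetCard (r - 1)) + #((∂ Q).image (insert u))
        + #((∂ K).image (insert v)) ≤ #(∂ 𝒜) := by
      have hsub : (M.powersetCard (r - 1) ∪ (∂ Q).image (insert u)) ∪ (∂ K).image (insert v)
          ⊆ ∂ 𝒜 := union_subset (union_subset P1 P2) P3
      have := card_le_card hsub
      rwa [card_union_of_disjoint (disjoint_union_left.2 ⟨hd13, hd23⟩),
        card_union_of_disjoint hd12] at this
    have hpascal : m.choose (r - 1) = (m - 1).choose (r - 2) + (m - 1).choose (r - 1) := by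
      have h1 : m = (m - 1) + 1 := by omega
      have h2 : r - 1 = (r - 2) + 1 := by omega
      rw [h1, h2, Nat.choose_succ_succ]
      simp
    rw [card_powersetCard, hMcard, hP2card, hP3card] at htot
    omega


end general2

section finN2
variable {N : ℕ}

lemma SSU : ∀ r : ℕ, 2 ≤ r → ∀ m : ℕ, m ≤ N → r ≤ m →
    ∀ 𝒜 : Finset (Finset (Fin N)), (𝒜 : Set (Finset (Fin N))).Sized r → #𝒜 = m.choose r →
    #(∂ 𝒜) ≤ m.choose (r - 1) → ∃ W : Finset (Fin N), #W = m ∧ 𝒜 = W.powersetCard r := by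
  intro r
  induction r using Nat.strong_induction_on with
  | _ r ihr =>
  intro hr2 m hmN hrm 𝒜 hsized hcard hshadow
  by_cases hmr : m = r
  · -- trivial case : 𝒜 is a single set
    subst hmr
    rw [Nat.choose_self] at hcard
    obtain ⟨b, hb⟩ := card_eq_one.1 hcard
    have hbc : #b = m := hsized (by rw [hb]; exact mem_singleton_self b)
    refine ⟨b, hbc, ?_⟩
    rw [hb, ← hbc, powersetCard_self]
  have hrm' : r < m := lt_of_le_of_ne hrm (fun h => hmr h.symm)
  by_cases hr2' : r = 2
  · -- base case r = 2
    subst hr2'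
    set V : Finset (Fin N) := 𝒜.sup id with hV
    have h𝒜V : 𝒜 ⊆ V.powersetCard 2 := by
      intro a ha
      rw [mem_powersetCard]
      exact ⟨le_sup (f := id) ha, hsized ha⟩
    have hsingle : ∀ x ∈ V, ({x} : Finset (Fin N)) ∈ ∂ 𝒜 := by
      intro x hx
      rw [hV, mem_sup] at hx
      obtain ⟨a, ha, hxa⟩ := hx
      obtain ⟨y, hy, hyx⟩ := exists_mem_ne (by rw [hsized ha]; omega) x
      have : a.erase y ∈ ∂ 𝒜 := erase_mem_shadow ha hy
      have hcae : #(a.erase y) = 1 := by rw [card_erase_of_mem hy, hsized ha]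
      obtain ⟨z, hz⟩ := card_eq_one.1 hcae
      have hxz : x ∈ a.erase y := mem_erase.2 ⟨fun h => hyx h.symm, hxa⟩
      rw [hz, mem_singleton] at hxz
      rw [hxz, ← hz]; exact this
    have hVle : #V ≤ m := by
      have h1 : #V ≤ #(∂ 𝒜) := by
        apply card_le_card_of_injOn (fun x => ({x} : Finset (Fin N))) hsingle
        intro a _ b _ hab
        exact singleton_injective hab
      have h2 : (2 : ℕ).choose (2 - 1) = 2 := by norm_num
      have h3 : m.choose (2 - 1) = m := by norm_num
      omega
    have hVge : m ≤ #V := by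
      by_contra hlt
      push_neg at hlt
      have h1 : #𝒜 ≤ (#V).choose 2 := by
        have := card_le_card h𝒜V
        rwa [card_powersetCard] at this
      have h2 : (#V).choose 2 ≤ (m - 1).choose 2 := Nat.choose_le_choose 2 (by omega)
      have h3 : m.choose 2 = (m - 1).choose 1 + (m - 1).choose 2 := by
        have hm : m = (m - 1) + 1 := by omega
        rw [hm]
        rw [Nat.choose_succ_succ]
        simp
      have h4 : (m - 1).choose 1 = m - 1 := Nat.choose_one_right _
      omega
    have hVm : #V = m := le_antisymm hVle hVge
    refine ⟨V, hVm, eq_of_subset_of_card_le h𝒜V ?_⟩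
    rw [card_powersetCard, hVm, hcard]
  have hr3 : 3 ≤ r := by omega
  -- inner induction on the measure
  suffices key : ∀ t : ℕ, ∀ 𝒜 : Finset (Finset (Fin N)), fmu 𝒜 ≤ t →
      (𝒜 : Set (Finset (Fin N))).Sized r → #𝒜 = m.choose r →
      #(∂ 𝒜) ≤ m.choose (r - 1) → ∃ W : Finset (Fin N), #W = m ∧ 𝒜 = W.powersetCard r by
    exact key (fmu 𝒜) 𝒜 le_rfl hsized hcard hshadow
  clear hsized hcard hshadow 𝒜
  intro t
  induction t using Nat.strong_induction_on with
  | _ t iht =>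
  intro 𝒜 hμ hsized hcard hshadow
  by_cases hshift : ∀ u v : Fin N, u < v → 𝓒 {u} {v} 𝒜 = 𝒜
  · -- shifted case
    have hN0 : 0 < N := by omega
    set x₀ : Fin N := ⟨0, hN0⟩ with hx₀
    set L : Finset (Finset (Fin N)) := flink 𝒜 x₀ with hL
    set D : Finset (Finset (Fin N)) := fdel 𝒜 x₀ with hD
    have hdD : ∂ D ⊆ L := by
      intro d hd
      rw [mem_shadow_iff] at hd
      obtain ⟨b, hbD, y, hy, rfl⟩ := hd
      rw [hD, fdel, mem_filter] at hbD
      obtain ⟨hb𝒜, hx₀b⟩ := hbD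
      have hyx₀ : x₀ < y := by
        rw [Fin.lt_def]
        have : (x₀ : ℕ) = 0 := rfl
        rw [this]
        rcases Nat.eq_zero_or_pos (y : ℕ) with h | h
        · exfalso; apply hx₀b
          have : y = x₀ := Fin.ext (by omega)
          exact this ▸ hy
        · exact h
      have hcomp : UV.compress {x₀} {y} b = insert x₀ (b.erase y) := by
        rw [UV.compress, if_pos ⟨by simpa using hx₀b, by simpa using hy⟩]
        ext z
        simp only [sup_eq_union, sdiff_singleton_eq_erase, mem_erase, mem_union, mem_singleton,
          mem_insert]
        constructor
        · rintro ⟨hzy, hz | rfl⟩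
          · exact Or.inr ⟨hzy, hz⟩
          · exact Or.inl rfl
        · rintro (rfl | ⟨hzy, hz⟩)
          · exact ⟨hyx₀.ne, Or.inr rfl⟩
          · exact ⟨hzy, Or.inl hz⟩
      have hmem : insert x₀ (b.erase y) ∈ 𝒜 := by
        rw [← hcomp, ← hshift x₀ y hyx₀]
        exact UV.compress_mem_compression hb𝒜
      rw [hL, mem_flink]
      refine ⟨insert x₀ (b.erase y), hmem, mem_insert_self _ _, ?_⟩
      rw [erase_insert (fun h => hx₀b (mem_of_mem_erase h))]
    have hdecomp : #(∂ 𝒜) = #(∂ L) + #L := by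
      rw [card_shadow_eq_link_del 𝒜 x₀, ← hL, ← hD, union_eq_left.2 hdD]
    have hpascal1 : m.choose (r - 1) = (m - 1).choose (r - 2) + (m - 1).choose (r - 1) := by
      have h1 : m = (m - 1) + 1 := by omega
      have h2 : r - 1 = (r - 2) + 1 := by omega
      rw [h1, h2, Nat.choose_succ_succ]
      simp
    have hpascal2 : m.choose r = (m - 1).choose (r - 1) + (m - 1).choose r := by
      have h1 : m = (m - 1) + 1 := by omega
      have h2 : r = (r - 1) + 1 := by omega
      rw [h1, h2, Nat.choose_succ_succ]
      simp
    have hsizedL : ((L : Finset (Finset (Fin N))) : Set (Finset (Fin N))).Sized (r - 1) :=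
      hL ▸ sized_flink hsized x₀
    have hsizedD : ((D : Finset (Finset (Fin N))) : Set (Finset (Fin N))).Sized r :=
      hD ▸ sized_fdel hsized x₀
    have hLD : #L + #D = m.choose r := by
      rw [hL, hD, card_flink_add_card_fdel, hcard]
    have hL_le : #L ≤ (m - 1).choose (r - 1) := by
      by_contra hlt
      push_neg at hlt
      have h1 : (m - 1).choose ((r - 1) - 1) < #(∂ L) :=
        strictKK (by omega) (by omega) (by omega) hsizedL hlt
      have h2 : (r - 1) - 1 = r - 2 := by omega
      rw [h2] at h1
      omega
    have hL_ge : (m - 1).choose (r - 1) ≤ #L := by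
      by_contra hlt
      push_neg at hlt
      have hDlt : (m - 1).choose r < #D := by omega
      have h1 : (m - 1).choose (r - 1) < #(∂ D) :=
        strictKK (by omega) (by omega) (by omega) hsizedD hDlt
      have h2 : #(∂ D) ≤ #L := card_le_card hdD
      omega
    have hLcard : #L = (m - 1).choose (r - 1) := le_antisymm hL_le hL_ge
    have hdL : #(∂ L) ≤ (m - 1).choose ((r - 1) - 1) := by
      have h2 : (r - 1) - 1 = r - 2 := by omega
      rw [h2]
      omega
    obtain ⟨W', hW'card, hLeq⟩ := ihr (r - 1) (by omega) (by omega) (m - 1) (by omega)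
      (by omega) L hsizedL hLcard hdL
    have hx₀W' : x₀ ∉ W' := by
      intro hx
      obtain ⟨e, he1, he2, he3⟩ := exists_subsuperset_card_eq (n := r - 1) (singleton_subset_iff.2 hx)
        (by rw [card_singleton]; omega) (by omega)
      have : e ∈ L := by
        rw [hLeq, mem_powersetCard]
        exact ⟨he2, he3⟩
      exact not_mem_of_mem_flink (hL ▸ this) (he1 (mem_singleton_self x₀))
    have hDsub : D ⊆ W'.powersetCard r := by
      intro d hd
      rw [mem_powersetCard]
      have hd𝒜 : d ∈ 𝒜 := by
        rw [hD, fdel, mem_filter] at hd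
        exact hd.1
      refine ⟨?_, hsized hd𝒜⟩
      intro x hx
      obtain ⟨y, hy, hyx⟩ := exists_mem_ne (by rw [hsized hd𝒜]; omega) x
      have : d.erase y ∈ ∂ D := erase_mem_shadow hd hy
      have hin : d.erase y ∈ L := hdD this
      rw [hLeq, mem_powersetCard] at hin
      exact hin.1 (mem_erase.2 ⟨fun h => hyx h.symm, hx⟩)
    have hDcard : #D = (m - 1).choose r := by omega
    have hDeq : D = W'.powersetCard r := by
      apply eq_of_subset_of_card_le hDsub
      rw [card_powersetCard, hW'card, hDcard]
    refine ⟨insert x₀ W', by rw [card_insert_of_notMem hx₀W', hW'card]; omega, ?_⟩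
    ext b
    rw [mem_powersetCard]
    constructor
    · intro hb
      refine ⟨?_, hsized hb⟩
      by_cases hx : x₀ ∈ b
      · have : b.erase x₀ ∈ L := by
          rw [hL, mem_flink]
          exact ⟨b, hb, hx, rfl⟩
        rw [hLeq, mem_powersetCard] at this
        intro z hz
        rw [mem_insert]
        by_cases hzx : z = x₀
        · exact Or.inl hzx
        · exact Or.inr (this.1 (mem_erase.2 ⟨hzx, hz⟩))
      · have : b ∈ D := by
          rw [hD, fdel, mem_filter]
          exact ⟨hb, hx⟩
        rw [hDeq, mem_powersetCard] at this
        exact this.1.trans (subset_insert _ _)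
    · rintro ⟨hbW, hbc⟩
      by_cases hx : x₀ ∈ b
      · have he : b.erase x₀ ∈ L := by
          rw [hLeq, mem_powersetCard]
          constructor
          · intro z hz
            rw [mem_erase] at hz
            have := hbW hz.2
            rw [mem_insert] at this
            tauto
          · rw [card_erase_of_mem hx, hbc]
        rw [hL, mem_flink] at he
        obtain ⟨a, ha, hxa, hae⟩ := he
        have : a = b := by
          rw [← insert_erase hxa, hae, insert_erase hx]
        exact this ▸ ha
      · have : b ∈ D := by
          rw [hDeq, mem_powersetCard]
          refine ⟨?_, hbc⟩
          intro z hz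
          have := hbW hz
          rw [mem_insert] at this
          rcases this with rfl | h
          · exact absurd hz hx
          · exact h
        rw [hD, fdel, mem_filter] at this
        exact this.1
  · -- non-shifted case : compress
    push_neg at hshift
    obtain ⟨u, v, huv, hne⟩ := hshift
    set ℬ : Finset (Finset (Fin N)) := 𝓒 {u} {v} 𝒜 with hℬ
    have hμB : fmu ℬ < fmu 𝒜 := fmu_compression_lt huv hne
    have hsizedB : (ℬ : Set (Finset (Fin N))).Sized r := by
      rw [hℬ]
      exact Set.Sized.uvCompression (by simp) hsized
    have hcardB : #ℬ = m.choose r := by rw [hℬ, UV.card_compression, hcard]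
    have hshadowB : #(∂ ℬ) ≤ m.choose (r - 1) := by
      refine le_trans ?_ hshadow
      rw [hℬ]
      apply UV.card_shadow_compression_le
      intro x hx
      rw [mem_singleton] at hx
      subst hx
      exact ⟨v, mem_singleton_self v, by rw [UV.IsCompressed, erase_singleton, erase_singleton,
        UV.compression_self]⟩
    obtain ⟨W, hWcard, hBeq⟩ := iht (fmu ℬ) (by omega) ℬ le_rfl hsizedB hcardB hshadowB
    exact uncompress huv.ne hr2 hrm' hWcard (hℬ ▸ hBeq) hshadow


lemma core : ∀ d l m : ℕ, 1 ≤ l → 1 ≤ d → l + d ≤ m → m < N →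
    ∀ 𝒜 : Finset (Finset (Fin N)), (𝒜 : Set (Finset (Fin N))).Sized (l + d) →
    𝒜.card = m.choose (l + d) → #(∂^[d] 𝒜) ≤ m.choose l →
    ∃ W : Finset (Fin N), #W = m ∧ 𝒜 = W.powersetCard (l + d) := by
  intro d
  induction d with
  | zero => intro l m _ h; omega
  | succ d ih =>
    intro l m hl hd hlm hmN 𝒜 hsized hcard hshadow
    by_cases hd0 : d = 0
    · subst hd0
      have h1 : #(∂ 𝒜) ≤ m.choose ((l + 1) - 1) := by
        rw [Function.iterate_one] at hshadow
        simpa using hshadow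
      exact SSU (l + 1) (by omega) m (by omega) (by omega) 𝒜 hsized hcard h1
    have hd1 : 1 ≤ d := by omega
    have hiter : ∂^[d + 1] 𝒜 = ∂^[d] (∂ 𝒜) := Function.iterate_succ_apply _ _ _
    have hsh : #(∂ 𝒜) = m.choose (l + d) := by
      apply le_antisymm
      · by_contra hgt
        push_neg at hgt
        have h1 := iterStrict hmN d (l + d) (by omega) (by omega) (∂ 𝒜) hsized.shadow
          (by
            have : (l + d + 1) - 1 = l + d := by omega
            omega)
        have h2 : l + d - d = l := by omega
        rw [h2] at h1
        rw [hiter] at hshadow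
        omega
      · have h2 := lovasz1 (by omega : 1 ≤ l + d + 1) (by omega : l + d + 1 ≤ m)
          (by omega : m ≤ N) hsized (le_of_eq hcard.symm)
        have h3 : l + d + 1 - 1 = l + d := by omega
        rwa [h3] at h2
    obtain ⟨W, hWcard, hWeq⟩ := ih l m hl hd1 (by omega) hmN (∂ 𝒜) hsized.shadow
      (by
        have h3 : l + d + 1 - 1 = l + d := by omega
        rw [← h3]
        exact hsh)
      (by rw [← hiter]; exact hshadow)
    have hsub : 𝒜 ⊆ W.powersetCard (l + (d + 1)) := by
      intro a ha
      rw [mem_powersetCard]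
      refine ⟨?_, hsized ha⟩
      intro x hx
      obtain ⟨y, hy, hyx⟩ := exists_mem_ne (by rw [hsized ha]; omega) x
      have h4 : a.erase y ∈ ∂ 𝒜 := erase_mem_shadow ha hy
      rw [hWeq, mem_powersetCard] at h4
      exact h4.1 (mem_erase.2 ⟨fun h => hyx h.symm, hx⟩)
    refine ⟨W, hWcard, eq_of_subset_of_card_le hsub ?_⟩
    rw [card_powersetCard, hWcard, hcard]


end finN2

section transfer
variable {n : ℕ}

def fpi (n : ℕ) (t : Finset ℕ) : Finset (Fin n) := {i : Fin n | (i : ℕ) + 1 ∈ t}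

lemma fiota_inj : Function.Injective (fun i : Fin n => (i : ℕ) + 1) := by
  intro a b h
  have h' : (a : ℕ) + 1 = (b : ℕ) + 1 := h
  exact Fin.ext (by omega)

lemma mem_fpi {t : Finset ℕ} {i : Fin n} : i ∈ fpi n t ↔ (i : ℕ) + 1 ∈ t := by
  simp [fpi]

lemma fiota_mem_Icc (i : Fin n) : (i : ℕ) + 1 ∈ Finset.Icc 1 n := by
  rw [mem_Icc]
  have := i.isLt
  omega

lemma image_fpi {t : Finset ℕ} (ht : t ⊆ Finset.Icc 1 n) :
    (fpi n t).image (fun i : Fin n => (i : ℕ) + 1) = t := by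
  ext y
  rw [mem_image]
  constructor
  · rintro ⟨i, hi, rfl⟩
    exact mem_fpi.1 hi
  · intro hy
    have hy' := mem_Icc.1 (ht hy)
    refine ⟨⟨y - 1, by omega⟩, ?_, by simp; omega⟩
    rw [mem_fpi]
    simp only []
    have : y - 1 + 1 = y := by omega
    rw [this]
    exact hy
lemma card_fpi {t : Finset ℕ} (ht : t ⊆ Finset.Icc 1 n) : #(fpi n t) = #t := by
  conv_rhs => rw [← image_fpi ht]
  rw [card_image_of_injective _ fiota_inj]

lemma fpi_image {c : Finset (Fin n)} : fpi n (c.image (fun i : Fin n => (i : ℕ) + 1)) = c := by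
  ext i
  rw [mem_fpi, mem_image]
  constructor
  · rintro ⟨j, hj, hji⟩
    have : j = i := fiota_inj hji
    exact this ▸ hj
  · intro hi
    exact ⟨i, hi, rfl⟩

lemma image_fiota_subset {c : Finset (Fin n)} :
    c.image (fun i : Fin n => (i : ℕ) + 1) ⊆ Finset.Icc 1 n := by
  intro y hy
  obtain ⟨i, -, rfl⟩ := mem_image.1 hy
  exact fiota_mem_Icc i

lemma card_image_fiota {c : Finset (Fin n)} :
    #(c.image (fun i : Fin n => (i : ℕ) + 1)) = #c :=
  card_image_of_injective _ fiota_inj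

end transfer

theorem stmt_14 (n k l s : ℕ) (hk : 0 < k) (hl : 0 < l) (hn : k + l < n)
    (hs1 : 1 ≤ s) (hsk : s ≤ k)
    (A : Finset (Finset ℕ)) (hA : A ⊆ (Finset.Icc 1 n).powersetCard k)
    (hcard : A.card = (n - s).choose (k - s)) :
    (n - s).choose l
        ≤ (((Finset.Icc 1 n).powersetCard l).filter (fun D => ∃ a ∈ A, a ∩ D = ∅)).card
    ∧ ((((Finset.Icc 1 n).powersetCard l).filter (fun D => ∃ a ∈ A, a ∩ D = ∅)).card
          = (n - s).choose l
        ↔ ∃ S ∈ (Finset.Icc 1 n).powersetCard s,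
            A = ((Finset.Icc 1 n).powersetCard k).filter (fun F => S ⊆ F)) := by
  classical
  have hIcc : #(Finset.Icc 1 n) = n := by rw [Nat.card_Icc]; omega
  have hAmem : ∀ a ∈ A, a ⊆ Finset.Icc 1 n ∧ #a = k := by
    intro a ha
    exact mem_powersetCard.1 (hA ha)
  set 𝒜 : Finset (Finset (Fin n)) := A.image (fpi n) with h𝒜
  set B : Finset (Finset (Fin n)) := 𝒜.image (fun c => cᶜ) with hB
  set i₀ : ℕ := n - k - l with hi₀
  set 𝒟 : Finset (Finset ℕ) :=
    ((Finset.Icc 1 n).powersetCard l).filter (fun D => ∃ a ∈ A, a ∩ D = ∅) with h𝒟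
  have hcompl_inj : Function.Injective (fun c : Finset (Fin n) => cᶜ) := by
    intro x y h
    have h' : xᶜ = yᶜ := h
    have : xᶜᶜ = yᶜᶜ := by rw [h']
    simpa using this
  have hcard𝒜 : #𝒜 = #A := by
    rw [h𝒜]
    apply card_image_of_injOn
    intro a ha b hb hab
    rw [mem_coe] at ha hb
    have : (fpi n a).image (fun i : Fin n => (i : ℕ) + 1)
        = (fpi n b).image (fun i : Fin n => (i : ℕ) + 1) := by rw [hab]
    rwa [image_fpi (hAmem a ha).1, image_fpi (hAmem b hb).1] at this
  have hsized𝒜 : (𝒜 : Set (Finset (Fin n))).Sized k := by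
    intro c hc
    rw [mem_coe, h𝒜, mem_image] at hc
    obtain ⟨a, ha, rfl⟩ := hc
    rw [card_fpi (hAmem a ha).1, (hAmem a ha).2]
  have hcardB : #B = #A := by
    rw [hB, card_image_of_injective _ hcompl_inj, hcard𝒜]
  have hsizedB : (B : Set (Finset (Fin n))).Sized (n - k) := by
    intro c hc
    rw [mem_coe, hB, mem_image] at hc
    obtain ⟨c', hc', rfl⟩ := hc
    rw [card_compl, Fintype.card_fin, hsized𝒜 hc']
  -- the bijection between 𝒟 and the iterated shadow of B
  have hbij : #𝒟 = #(∂^[i₀] B) := by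
    apply card_bij (fun D _ => fpi n D)
    · -- maps into the iterated shadow
      intro D hD
      rw [h𝒟, mem_filter, mem_powersetCard] at hD
      obtain ⟨⟨hDIcc, hDcard⟩, a, haA, haD⟩ := hD
      rw [mem_shadow_iterate_iff_exists_sdiff]
      refine ⟨(fpi n a)ᶜ, ?_, ?_, ?_⟩
      · rw [hB, mem_image]
        exact ⟨fpi n a, by rw [h𝒜, mem_image]; exact ⟨a, haA, rfl⟩, rfl⟩
      · intro i hi
        rw [mem_compl, mem_fpi]
        intro hia
        have : (i : ℕ) + 1 ∈ a ∩ D := mem_inter.2 ⟨hia, mem_fpi.1 hi⟩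
        rw [haD] at this
        exact notMem_empty _ this
      · have h1 : #((fpi n a)ᶜ) = n - k := by
          rw [card_compl, Fintype.card_fin, card_fpi (hAmem a haA).1, (hAmem a haA).2]
        have h2 : #(fpi n D) = l := by rw [card_fpi hDIcc, hDcard]
        have hsub : fpi n D ⊆ (fpi n a)ᶜ := by
          intro i hi
          rw [mem_compl, mem_fpi]
          intro hia
          have : (i : ℕ) + 1 ∈ a ∩ D := mem_inter.2 ⟨hia, mem_fpi.1 hi⟩
          rw [haD] at this
          exact notMem_empty _ this
        have := card_sdiff_add_card_eq_card hsub
        omega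
    · -- injective
      intro D hD D' hD' hDD'
      rw [h𝒟, mem_filter, mem_powersetCard] at hD hD'
      have : (fpi n D).image (fun i : Fin n => (i : ℕ) + 1)
          = (fpi n D').image (fun i : Fin n => (i : ℕ) + 1) := by rw [hDD']
      rwa [image_fpi hD.1.1, image_fpi hD'.1.1] at this
    · -- surjective
      intro E hE
      rw [mem_shadow_iterate_iff_exists_sdiff] at hE
      obtain ⟨sB, hsB, hEs, hsd⟩ := hE
      rw [hB, mem_image] at hsB
      obtain ⟨c, hc𝒜, rfl⟩ := hsB
      rw [h𝒜, mem_image] at hc𝒜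
      obtain ⟨a, haA, rfl⟩ := hc𝒜
      have hcc : #((fpi n a)ᶜ) = n - k := by
        rw [card_compl, Fintype.card_fin, card_fpi (hAmem a haA).1, (hAmem a haA).2]
      have hEcard : #E = l := by
        have := card_sdiff_add_card_eq_card hEs
        omega
      refine ⟨E.image (fun i : Fin n => (i : ℕ) + 1), ?_, fpi_image⟩
      rw [h𝒟, mem_filter, mem_powersetCard]
      refine ⟨⟨image_fiota_subset, by rw [card_image_fiota, hEcard]⟩, a, haA, ?_⟩
      rw [eq_empty_iff_forall_notMem]
      intro y hy
      rw [mem_inter, mem_image] at hy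
      obtain ⟨hya, i, hiE, rfl⟩ := hy
      have := hEs hiE
      rw [mem_compl, mem_fpi] at this
      exact this hya
  -- the choose identity
  have hsym : (n - s).choose (n - k) = (n - s).choose (k - s) := by
    have h1 : n - k = (n - s) - (k - s) := by omega
    rw [h1, Nat.choose_symm (by omega : k - s ≤ n - s)]
  have hcardB' : #B = (n - s).choose (n - k) := by
    rw [hcardB, hcard, hsym]
  -- the inequality
  have hineq : (n - s).choose l ≤ #𝒟 := by
    rw [hbij]
    have := lovaszIter (i := i₀) (r := n - k) (m := n - s) (by omega) (by omega) (by omega)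
      hsizedB (le_of_eq hcardB'.symm)
    have h2 : n - k - i₀ = l := by omega
    rwa [h2] at this
  refine ⟨hineq, ?_, ?_⟩
  · -- equality implies star structure
    intro hEq
    have hlk : l + i₀ = n - k := by omega
    obtain ⟨W, hWcard, hBeq⟩ := core i₀ l (n - s) (by omega) (by omega) (by omega) (by omega)
      B (by rw [hlk]; exact hsizedB) (by rw [hlk]; exact hcardB')
      (by rw [← hbij, hEq])
    rw [hlk] at hBeq
    set S : Finset ℕ := Wᶜ.image (fun i : Fin n => (i : ℕ) + 1) with hS
    have hWc : #(Wᶜ) = s := by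
      rw [card_compl, Fintype.card_fin, hWcard]
      omega
    refine ⟨S, ?_, ?_⟩
    · rw [mem_powersetCard]
      exact ⟨image_fiota_subset, by rw [card_image_fiota, hWc]⟩
    · ext F
      rw [mem_filter, mem_powersetCard]
      constructor
      · intro hF
        obtain ⟨hFIcc, hFcard⟩ := hAmem F hF
        refine ⟨⟨hFIcc, hFcard⟩, ?_⟩
        intro y hy
        rw [hS, mem_image] at hy
        obtain ⟨i, hiWc, rfl⟩ := hy
        have hmemB : (fpi n F)ᶜ ∈ B := by
          rw [hB, mem_image]
          exact ⟨fpi n F, by rw [h𝒜, mem_image]; exact ⟨F, hF, rfl⟩, rfl⟩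
        rw [hBeq, mem_powersetCard] at hmemB
        have hiW : i ∉ W := mem_compl.1 hiWc
        have : i ∉ (fpi n F)ᶜ := fun h => hiW (hmemB.1 h)
        rw [mem_compl, not_not, mem_fpi] at this
        exact this
      · rintro ⟨⟨hFIcc, hFcard⟩, hSF⟩
        have hcW : (fpi n F)ᶜ ⊆ W := by
          intro i hi
          rw [mem_compl, mem_fpi] at hi
          by_contra hiW
          have hiWc : i ∈ Wᶜ := mem_compl.2 hiW
          have : (i : ℕ) + 1 ∈ S := by
            rw [hS, mem_image]
            exact ⟨i, hiWc, rfl⟩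
          exact hi (hSF this)
        have hcmem : (fpi n F)ᶜ ∈ B := by
          rw [hBeq, mem_powersetCard]
          refine ⟨hcW, ?_⟩
          rw [card_compl, Fintype.card_fin, card_fpi hFIcc, hFcard]
        rw [hB, mem_image] at hcmem
        obtain ⟨c', hc', hcc'⟩ := hcmem
        have : c' = fpi n F := by
          have := congrArg (fun x : Finset (Fin n) => xᶜ) hcc'
          simpa using this
        rw [this, h𝒜, mem_image] at hc'
        obtain ⟨a, haA, ha⟩ := hc'
        have : a = F := by
          have h1 : (fpi n a).image (fun i : Fin n => (i : ℕ) + 1)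
              = (fpi n F).image (fun i : Fin n => (i : ℕ) + 1) := by rw [ha]
          rwa [image_fpi (hAmem a haA).1, image_fpi hFIcc] at h1
        exact this ▸ haA
  · -- star structure implies equality
    rintro ⟨S, hSmem, hAeq⟩
    rw [mem_powersetCard] at hSmem
    obtain ⟨hSIcc, hScard⟩ := hSmem
    have h𝒟eq : 𝒟 = (Finset.Icc 1 n \ S).powersetCard l := by
      ext D
      rw [h𝒟, mem_filter, mem_powersetCard, mem_powersetCard]
      constructor
      · rintro ⟨⟨hDIcc, hDcard⟩, a, haA, haD⟩
        refine ⟨?_, hDcard⟩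
        intro x hx
        rw [mem_sdiff]
        refine ⟨hDIcc hx, ?_⟩
        intro hxS
        have hSa : S ⊆ a := by
          rw [hAeq, mem_filter] at haA
          exact haA.2
        have : x ∈ a ∩ D := mem_inter.2 ⟨hSa hxS, hx⟩
        rw [haD] at this
        exact notMem_empty _ this
      · rintro ⟨hDsub, hDcard⟩
        have hDIcc : D ⊆ Finset.Icc 1 n := fun x hx => (mem_sdiff.1 (hDsub hx)).1
        refine ⟨⟨hDIcc, hDcard⟩, ?_⟩
        have hSsub : S ⊆ Finset.Icc 1 n \ D := by
          intro x hx
          rw [mem_sdiff]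
          refine ⟨hSIcc hx, ?_⟩
          intro hxD
          exact (mem_sdiff.1 (hDsub hxD)).2 hx
        have hcardId : #(Finset.Icc 1 n \ D) = n - l := by
          rw [card_sdiff_of_subset hDIcc, hIcc, hDcard]
        obtain ⟨a, hSa, haId, hacard⟩ := exists_subsuperset_card_eq (n := k) hSsub
          (by omega) (by omega)
        refine ⟨a, ?_, ?_⟩
        · rw [hAeq, mem_filter, mem_powersetCard]
          exact ⟨⟨fun x hx => (mem_sdiff.1 (haId hx)).1, hacard⟩, hSa⟩
        · rw [eq_empty_iff_forall_notMem]
          intro y hy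
          rw [mem_inter] at hy
          exact (mem_sdiff.1 (haId hy.1)).2 hy.2
    rw [h𝒟eq, card_powersetCard, card_sdiff_of_subset hSIcc, hIcc, hScard]
end

section
/- If A ⊆ C([n],k) and B ⊆ C([n],l) are cross-intersecting families, then the L-initial families A_L and B_L (consisting of the first |A| sets of C([n],k) and the first |B| sets of C([n],l) in lexicographic order, respectively) are also cross-intersecting. -/
attribute [-instance] instDecidableEqFin

open Finset Finset.Colex
open scoped FinsetFamily

/-- Lexicographic (colex-style "first element" based) order on finite sets:
`A ≺ B` iff `min (A \ B) < min (B \ A)`. -/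
def lexLt (A B : Finset ℕ) : Prop := (A \ B).min < (B \ A).min

namespace HiltonAux

variable {n : ℕ}

/-- The order-reversing embedding of `Icc 1 n` into `Fin n`, `i ↦ n - i`. -/
def eF (n : ℕ) (hn : 0 < n) (i : ℕ) : Fin n := ⟨(n - i) % n, Nat.mod_lt _ hn⟩

lemma eF_val (hn : 0 < n) {i : ℕ} (h1 : 1 ≤ i) (h2 : i ≤ n) : (eF n hn i : ℕ) = n - i := by
  simp only [eF]
  exact Nat.mod_eq_of_lt (by omega)

/-- The inverse map `Fin n → ℕ`, `x ↦ n - x`. -/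
def dF (n : ℕ) (x : Fin n) : ℕ := n - (x : ℕ)

lemma dF_mem (x : Fin n) : dF n x ∈ Finset.Icc 1 n := by
  have := x.isLt; simp only [dF, Finset.mem_Icc]; omega

lemma eF_dF (hn : 0 < n) (x : Fin n) : eF n hn (dF n x) = x := by
  have h := x.isLt
  apply Fin.ext
  show (n - (n - (x : ℕ))) % n = (x : ℕ)
  have h2 : n - (n - (x : ℕ)) = (x : ℕ) := by omega
  rw [h2, Nat.mod_eq_of_lt h]

lemma dF_eF (hn : 0 < n) {i : ℕ} (h1 : 1 ≤ i) (h2 : i ≤ n) : dF n (eF n hn i) = i := by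
  simp only [dF, eF_val hn h1 h2]; omega

lemma dF_injective : Function.Injective (dF n) := by
  intro x y h
  have hx := x.isLt; have hy := y.isLt
  apply Fin.ext
  simp only [dF] at h
  omega

lemma eF_lt (hn : 0 < n) {i j : ℕ} (h1 : 1 ≤ i) (hij : i < j) (h2 : j ≤ n) :
    eF n hn j < eF n hn i := by
  rw [Fin.lt_def, eF_val hn h1 (by omega), eF_val hn (by omega) h2]
  omega

/-- Image of a set under the reversal map. -/
def GF (hn : 0 < n) (s : Finset ℕ) : Finset (Fin n) := s.image (eF n hn)

lemma mem_GF (hn : 0 < n) {s : Finset ℕ} (hs : s ⊆ Finset.Icc 1 n) {x : Fin n} :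
    x ∈ GF hn s ↔ dF n x ∈ s := by
  constructor
  · intro hx
    rw [GF, mem_image] at hx
    obtain ⟨i, hi, rfl⟩ := hx
    obtain ⟨h1, h2⟩ := Finset.mem_Icc.1 (hs hi)
    rwa [dF_eF hn h1 h2]
  · intro h
    rw [GF, mem_image]
    exact ⟨dF n x, h, eF_dF hn x⟩

lemma card_GF (hn : 0 < n) {s : Finset ℕ} (hs : s ⊆ Finset.Icc 1 n) : #(GF hn s) = #s := by
  refine card_image_of_injOn fun i hi j hj h => ?_
  obtain ⟨hi1, hi2⟩ := Finset.mem_Icc.1 (hs hi)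
  obtain ⟨hj1, hj2⟩ := Finset.mem_Icc.1 (hs hj)
  rw [← dF_eF hn hi1 hi2, h, dF_eF hn hj1 hj2]

/-- Preimage map on sets. -/
def DF (n : ℕ) (X : Finset (Fin n)) : Finset ℕ := X.image (dF n)

lemma DF_subset (X : Finset (Fin n)) : DF n X ⊆ Finset.Icc 1 n := by
  intro i hi
  rw [DF, mem_image] at hi
  obtain ⟨x, _, rfl⟩ := hi
  exact dF_mem x

lemma card_DF (X : Finset (Fin n)) : #(DF n X) = #X :=
  card_image_of_injective _ dF_injective

lemma GF_DF (hn : 0 < n) (X : Finset (Fin n)) : GF hn (DF n X) = X := by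
  rw [GF, DF, image_image]
  rw [show ((eF n hn) ∘ (dF n)) = id from funext fun x => eF_dF hn x, image_id]

lemma DF_GF (hn : 0 < n) {s : Finset ℕ} (hs : s ⊆ Finset.Icc 1 n) : DF n (GF hn s) = s := by
  rw [DF, GF, image_image]
  refine (Finset.image_congr ?_).trans s.image_id
  intro i hi
  obtain ⟨h1, h2⟩ := Finset.mem_Icc.1 (hs hi)
  exact dF_eF hn h1 h2

lemma key (hn : 0 < n) {s t : Finset ℕ} (h : lexLt s t) :
    ∃ m, m ∈ s ∧ m ∉ t ∧ ∀ j ∈ t, j ∉ s → m < j := by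
  unfold lexLt at h
  rcases (s \ t).eq_empty_or_nonempty with he | hne
  · rw [he] at h; simp at h
  obtain ⟨hm1, hm2⟩ := Finset.mem_sdiff.1 ((s \ t).min'_mem hne)
  refine ⟨(s \ t).min' hne, hm1, hm2, fun j hj hjs => ?_⟩
  have hjmem : j ∈ t \ s := Finset.mem_sdiff.2 ⟨hj, hjs⟩
  have h2 : (t \ s).min ≤ (j : WithTop ℕ) := Finset.min_le hjmem
  have h1 : (((s \ t).min' hne : ℕ) : WithTop ℕ) = (s \ t).min := Finset.coe_min' hne
  have : (((s \ t).min' hne : ℕ) : WithTop ℕ) < (j : WithTop ℕ) := by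
    rw [h1]; exact lt_of_lt_of_le h h2
  exact_mod_cast this

lemma lexLt_total {s t : Finset ℕ} (hcard : #s = #t) (hne : s ≠ t) :
    lexLt s t ∨ lexLt t s := by
  have h1 : (s \ t).Nonempty := by
    rw [sdiff_nonempty]
    intro hsub
    exact hne (Finset.eq_of_subset_of_card_le hsub hcard.ge)
  have h2 : (t \ s).Nonempty := by
    rw [sdiff_nonempty]
    intro hsub
    exact hne (Finset.eq_of_subset_of_card_le hsub hcard.le).symm
  have hmem1 := Finset.mem_sdiff.1 ((s \ t).min'_mem h1)
  have hmem2 := Finset.mem_sdiff.1 ((t \ s).min'_mem h2)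
  have hmins : (s \ t).min ≠ (t \ s).min := by
    rw [← Finset.coe_min' h1, ← Finset.coe_min' h2]
    intro h
    have : (s \ t).min' h1 = (t \ s).min' h2 := by exact_mod_cast h
    exact hmem1.2 (this ▸ hmem2.1)
  rcases lt_or_gt_of_ne hmins with h | h
  · exact Or.inl h
  · exact Or.inr h


lemma mem_GF_self (hn : 0 < n) {s : Finset ℕ} {i : ℕ} (hi : i ∈ s) : eF n hn i ∈ GF hn s :=
  Finset.mem_image_of_mem _ hi

lemma GF_lt (hn : 0 < n) {s t : Finset ℕ} (hs : s ⊆ Finset.Icc 1 n) (ht : t ⊆ Finset.Icc 1 n)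
    (h : lexLt s t) : toColex (GF hn t) < toColex (GF hn s) := by
  obtain ⟨m, hms, hmt, hlt⟩ := key hn h
  obtain ⟨hm1, hm2⟩ := Finset.mem_Icc.1 (hs hms)
  rw [toColex_lt_toColex_iff_exists_forall_lt]
  refine ⟨eF n hn m, mem_GF_self hn hms, ?_, ?_⟩
  · rw [mem_GF hn ht, dF_eF hn hm1 hm2]; exact hmt
  · intro b hb hbs
    have hjt : dF n b ∈ t := (mem_GF hn ht).1 hb
    have hjs : dF n b ∉ s := fun hmem => hbs ((mem_GF hn hs).2 hmem)
    have hlt' := hlt _ hjt hjs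
    have h2 := Finset.mem_Icc.1 (dF_mem b)
    calc b = eF n hn (dF n b) := (eF_dF hn b).symm
    _ < eF n hn m := eF_lt hn hm1 hlt' h2.2

lemma GFc_lt (hn : 0 < n) {s t : Finset ℕ} (hs : s ⊆ Finset.Icc 1 n) (ht : t ⊆ Finset.Icc 1 n)
    (h : lexLt s t) : toColex (GF hn s)ᶜ < toColex (GF hn t)ᶜ := by
  obtain ⟨m, hms, hmt, hlt⟩ := key hn h
  obtain ⟨hm1, hm2⟩ := Finset.mem_Icc.1 (hs hms)
  rw [toColex_lt_toColex_iff_exists_forall_lt]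
  refine ⟨eF n hn m, ?_, ?_, ?_⟩
  · rw [Finset.mem_compl, mem_GF hn ht, dF_eF hn hm1 hm2]; exact hmt
  · rw [Finset.mem_compl, not_not]; exact mem_GF_self hn hms
  · intro b hb hbt
    rw [Finset.mem_compl] at hb
    rw [Finset.mem_compl, not_not] at hbt
    have hjt : dF n b ∈ t := (mem_GF hn ht).1 hbt
    have hjs : dF n b ∉ s := fun hmem => hb ((mem_GF hn hs).2 hmem)
    have hlt' := hlt _ hjt hjs
    have h2 := Finset.mem_Icc.1 (dF_mem b)
    calc b = eF n hn (dF n b) := (eF_dF hn b).symm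
    _ < eF n hn m := eF_lt hn hm1 hlt' h2.2

lemma lexLt_of_GFc_lt (hn : 0 < n) {s t : Finset ℕ} (hs : s ⊆ Finset.Icc 1 n)
    (ht : t ⊆ Finset.Icc 1 n) (hcard : #s = #t)
    (h : toColex (GF hn s)ᶜ < toColex (GF hn t)ᶜ) : lexLt s t := by
  have hne : s ≠ t := by rintro rfl; exact lt_irrefl _ h
  rcases lexLt_total hcard hne with h' | h'
  · exact h'
  · exact absurd (GFc_lt hn ht hs h') h.asymm

lemma lexLt_of_GF_lt (hn : 0 < n) {s t : Finset ℕ} (hs : s ⊆ Finset.Icc 1 n)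
    (ht : t ⊆ Finset.Icc 1 n) (hcard : #s = #t)
    (h : toColex (GF hn t) < toColex (GF hn s)) : lexLt s t := by
  have hne : s ≠ t := by
    rintro rfl; exact lt_irrefl _ h
  rcases lexLt_total hcard hne with h' | h'
  · exact h'
  · exact absurd (GF_lt hn ht hs h') h.asymm

lemma isInitSeg_shadow_iterate {α : Type*} [LinearOrder α] [Fintype α]
    {𝒜 : Finset (Finset α)} {r : ℕ} (h : IsInitSeg 𝒜 r) :
    ∀ j, IsInitSeg (∂^[j] 𝒜) (r - j)
  | 0 => by simpa using h
  | (j + 1) => by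
    rw [Function.iterate_succ_apply', show r - (j + 1) = r - j - 1 by omega]
    exact (isInitSeg_shadow_iterate h j).shadow

lemma main (n k l : ℕ) (hn : 0 < n) (hkl : k + l ≤ n)
    (A B AL BL : Finset (Finset ℕ))
    (hA : A ⊆ (Finset.Icc 1 n).powersetCard k)
    (hB : B ⊆ (Finset.Icc 1 n).powersetCard l)
    (hcross : ∀ a ∈ A, ∀ b ∈ B, (a ∩ b).Nonempty)
    (hAL : AL ⊆ (Finset.Icc 1 n).powersetCard k)
    (hBL : BL ⊆ (Finset.Icc 1 n).powersetCard l)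
    (hALcard : AL.card = A.card) (hBLcard : BL.card = B.card)
    (hALinit : ∀ X ∈ AL, ∀ Y ∈ (Finset.Icc 1 n).powersetCard k, lexLt Y X → Y ∈ AL)
    (hBLinit : ∀ X ∈ BL, ∀ Y ∈ (Finset.Icc 1 n).powersetCard l, lexLt Y X → Y ∈ BL) :
    ∀ a ∈ AL, ∀ b ∈ BL, (a ∩ b).Nonempty := by
  intro a haAL b hbBL
  by_contra hcon
  rw [Finset.not_nonempty_iff_eq_empty] at hcon
  -- basic unfolding of powersetCard memberships
  have hAmem : ∀ s ∈ A, s ⊆ Finset.Icc 1 n ∧ #s = k := fun s hs => mem_powersetCard.1 (hA hs)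
  have hBmem : ∀ s ∈ B, s ⊆ Finset.Icc 1 n ∧ #s = l := fun s hs => mem_powersetCard.1 (hB hs)
  have hALmem : ∀ s ∈ AL, s ⊆ Finset.Icc 1 n ∧ #s = k := fun s hs => mem_powersetCard.1 (hAL hs)
  have hBLmem : ∀ s ∈ BL, s ⊆ Finset.Icc 1 n ∧ #s = l := fun s hs => mem_powersetCard.1 (hBL hs)
  set j := n - k - l with hj
  set Fc : Finset ℕ → Finset (Fin n) := fun s => (GF hn s)ᶜ with hFc
  -- injectivity of Fc on subsets of Icc 1 n
  have hFcinj : ∀ s ⊆ Finset.Icc 1 n, ∀ t ⊆ Finset.Icc 1 n, Fc s = Fc t → s = t := by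
    intro s hs t ht h
    have : GF hn s = GF hn t := by
      have := congrArg (·ᶜ) h
      simpa [hFc] using this
    rw [← DF_GF hn hs, this, DF_GF hn ht]
  have hcardFc : ∀ s ⊆ Finset.Icc 1 n, #s = k → #(Fc s) = n - k := by
    intro s hs hcard
    rw [hFc]
    simp only [Finset.card_compl, Fintype.card_fin, card_GF hn hs, hcard]
  -- the families on the Fin n side
  set As := A.image Fc with hAs
  set ALs := AL.image Fc with hALs
  have hAs_card : #As = #A :=
    card_image_of_injOn fun s hs t ht h =>
      hFcinj s (hAmem s hs).1 t (hAmem t ht).1 h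
  have hALs_card : #ALs = #AL :=
    card_image_of_injOn fun s hs t ht h =>
      hFcinj s (hALmem s hs).1 t (hALmem t ht).1 h
  have hAs_sized : (As : Set (Finset (Fin n))).Sized (n - k) := by
    intro X hX
    rw [Finset.mem_coe, hAs, mem_image] at hX
    obtain ⟨s, hs, rfl⟩ := hX
    exact hcardFc s (hAmem s hs).1 (hAmem s hs).2
  have hALs_init : IsInitSeg ALs (n - k) := by
    constructor
    · intro X hX
      rw [Finset.mem_coe, hALs, mem_image] at hX
      obtain ⟨s, hs, rfl⟩ := hX
      exact hcardFc s (hALmem s hs).1 (hALmem s hs).2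
    · rintro s' t' hs' ⟨hlt, hcard⟩
      rw [hALs, mem_image] at hs'
      obtain ⟨a', ha', rfl⟩ := hs'
      set Y := DF n t'ᶜ with hY
      have hYsub : Y ⊆ Finset.Icc 1 n := DF_subset _
      have hYcard : #Y = k := by
        rw [hY, card_DF, Finset.card_compl, Fintype.card_fin, hcard]
        omega
      have hFcY : Fc Y = t' := by
        rw [hFc]; simp only [hY]
        rw [GF_DF hn, compl_compl]
      have hlex : lexLt Y a' := by
        apply lexLt_of_GFc_lt hn hYsub (hALmem a' ha').1 (by rw [hYcard, (hALmem a' ha').2])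
        have h1 : (GF hn Y)ᶜ = t' := hFcY
        rw [h1]
        exact hlt
      have hYAL : Y ∈ AL := hALinit a' ha' Y (mem_powersetCard.2 ⟨hYsub, hYcard⟩) hlex
      rw [hALs, mem_image]
      exact ⟨Y, hYAL, hFcY⟩
  -- Kruskal-Katona
  have hKK : #(∂^[j] ALs) ≤ #(∂^[j] As) := by
    apply iterated_kk hAs_sized _ hALs_init
    rw [hAs_card, hALs_card, hALcard]
  -- the shadow family
  set S := ∂^[j] ALs with hS
  have hS_init : IsInitSeg S l := by
    have := isInitSeg_shadow_iterate hALs_init j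
    rwa [show n - k - j = l by omega] at this
  -- B image
  set T := BL.image (GF hn) with hT
  have hGFinj : ∀ s ⊆ Finset.Icc 1 n, ∀ t ⊆ Finset.Icc 1 n, GF hn s = GF hn t → s = t := by
    intro s hs t ht h
    rw [← DF_GF hn hs, h, DF_GF hn ht]
  have hT_card : #T = #BL :=
    card_image_of_injOn fun s hs t ht h =>
      hGFinj s (hBLmem s hs).1 t (hBLmem t ht).1 h
  set Bimg := B.image (GF hn) with hBimg
  have hBimg_card : #Bimg = #B :=
    card_image_of_injOn fun s hs t ht h =>
      hGFinj s (hBmem s hs).1 t (hBmem t ht).1 h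
  -- disjointness of Bimg and the iterated shadow of As, from cross-intersecting
  have hdisj : Disjoint Bimg (∂^[j] As) := by
    rw [Finset.disjoint_left]
    intro x hx hxS
    rw [hBimg, mem_image] at hx
    obtain ⟨b', hb', rfl⟩ := hx
    rw [mem_shadow_iterate_iff_exists_sdiff] at hxS
    obtain ⟨X, hX, hsub, -⟩ := hxS
    rw [hAs, mem_image] at hX
    obtain ⟨a', ha', rfl⟩ := hX
    obtain ⟨i, hi⟩ := hcross a' ha' b' hb'
    rw [Finset.mem_inter] at hi
    have h1 : eF n hn i ∈ GF hn b' := mem_GF_self hn hi.2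
    have h2 := hsub h1
    rw [hFc, Finset.mem_compl] at h2
    exact h2 (mem_GF_self hn hi.1)
  -- both families live inside powersetCard l univ
  have hBimg_sub : Bimg ⊆ powersetCard l (univ : Finset (Fin n)) := by
    intro x hx
    rw [hBimg, mem_image] at hx
    obtain ⟨b', hb', rfl⟩ := hx
    exact mem_powersetCard.2 ⟨subset_univ _, by rw [card_GF hn (hBmem b' hb').1, (hBmem b' hb').2]⟩
  have hshadow_sub : (∂^[j] As) ⊆ powersetCard l (univ : Finset (Fin n)) := by
    intro x hx
    rw [mem_shadow_iterate_iff_exists_sdiff] at hx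
    obtain ⟨X, hX, hsub, hcard⟩ := hx
    have hXcard : #X = n - k := hAs_sized hX
    have h1 : #(X \ x) = #X - #x := card_sdiff_of_subset hsub
    have h2 : #x ≤ #X := card_le_card hsub
    refine mem_powersetCard.2 ⟨subset_univ _, ?_⟩
    omega
  have hbound : #Bimg + #(∂^[j] As) ≤ #(powersetCard l (univ : Finset (Fin n))) := by
    rw [← card_union_of_disjoint hdisj]
    exact card_le_card (union_subset hBimg_sub hshadow_sub)
  -- the witness x = GF b is in both T and S
  have hasub := (hALmem a haAL).1
  have hbsub := (hBLmem b hbBL).1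
  set x := GF hn b with hx
  have hxT : x ∈ T := mem_image_of_mem _ hbBL
  have hxsub : x ⊆ Fc a := by
    intro y hy
    rw [hFc, Finset.mem_compl]
    intro hy2
    have h1 : dF n y ∈ b := (mem_GF hn hbsub).1 hy
    have h2 : dF n y ∈ a := (mem_GF hn hasub).1 hy2
    have : dF n y ∈ a ∩ b := Finset.mem_inter.2 ⟨h2, h1⟩
    rw [hcon] at this
    exact absurd this (Finset.notMem_empty _)
  have hxcard : #x = l := by rw [hx, card_GF hn hbsub, (hBLmem b hbBL).2]
  have hxS : x ∈ S := by
    rw [hS, mem_shadow_iterate_iff_exists_sdiff]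
    refine ⟨Fc a, mem_image_of_mem _ haAL, hxsub, ?_⟩
    rw [card_sdiff_of_subset hxsub, hcardFc a hasub (hALmem a haAL).2, hxcard]
  -- covering: every l-set is in T ∪ S
  have hcover : powersetCard l (univ : Finset (Fin n)) ⊆ T ∪ S := by
    intro y hy
    have hycard : #y = l := (mem_powersetCard.1 hy).2
    rcases lt_trichotomy (toColex y) (toColex x) with h | h | h
    · exact Finset.mem_union_right _ (hS_init.2 hxS ⟨h, hycard⟩)
    · have : y = x := toColex_inj.1 h
      exact Finset.mem_union_right _ (this ▸ hxS)
    · set c := DF n y with hc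
      have hcsub : c ⊆ Finset.Icc 1 n := DF_subset _
      have hccard : #c = l := by rw [hc, card_DF, hycard]
      have hGFc : GF hn c = y := GF_DF hn y
      have hlex : lexLt c b := by
        apply lexLt_of_GF_lt hn hcsub hbsub (by rw [hccard, (hBLmem b hbBL).2])
        rw [hGFc]
        exact h
      have hcBL : c ∈ BL := hBLinit b hbBL c (mem_powersetCard.2 ⟨hcsub, hccard⟩) hlex
      exact Finset.mem_union_left _ (hGFc ▸ mem_image_of_mem _ hcBL)
  -- counting
  have hc1 : #(powersetCard l (univ : Finset (Fin n))) ≤ #(T ∪ S) := card_le_card hcover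
  have hc2 : #(T ∪ S) + #(T ∩ S) = #T + #S := card_union_add_card_inter T S
  have hc3 : 1 ≤ #(T ∩ S) := card_pos.2 ⟨x, Finset.mem_inter.2 ⟨hxT, hxS⟩⟩
  rw [hT_card, hBLcard] at hc2
  rw [hBimg_card] at hbound
  omega

end HiltonAux

theorem stmt_15 (n k l : ℕ)
    (A B AL BL : Finset (Finset ℕ))
    (hA : A ⊆ (Finset.Icc 1 n).powersetCard k)
    (hB : B ⊆ (Finset.Icc 1 n).powersetCard l)
    (hcross : ∀ a ∈ A, ∀ b ∈ B, (a ∩ b).Nonempty)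
    (hAL : AL ⊆ (Finset.Icc 1 n).powersetCard k)
    (hBL : BL ⊆ (Finset.Icc 1 n).powersetCard l)
    (hALcard : AL.card = A.card) (hBLcard : BL.card = B.card)
    (hALinit : ∀ X ∈ AL, ∀ Y ∈ (Finset.Icc 1 n).powersetCard k, lexLt Y X → Y ∈ AL)
    (hBLinit : ∀ X ∈ BL, ∀ Y ∈ (Finset.Icc 1 n).powersetCard l, lexLt Y X → Y ∈ BL) :
    ∀ a ∈ AL, ∀ b ∈ BL, (a ∩ b).Nonempty := by
  rcases le_or_gt (k + l) n with hkl | hkl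
  · rcases Nat.eq_zero_or_pos n with rfl | hn
    · -- n = 0, hence k = l = 0 and everything collapses
      intro a ha b hb
      exfalso
      have hk : k = 0 := by omega
      have hl : l = 0 := by omega
      subst hk; subst hl
      have hA0 : (∅ : Finset ℕ) ∈ A := by
        have hAne : A.Nonempty := by
          rw [← Finset.card_pos, ← hALcard]
          exact Finset.card_pos.2 ⟨a, ha⟩
        obtain ⟨a', ha'⟩ := hAne
        have h := hA ha'
        rw [Finset.powersetCard_zero, Finset.mem_singleton] at h
        rwa [h] at ha'
      have hB0 : (∅ : Finset ℕ) ∈ B := by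
        have hBne : B.Nonempty := by
          rw [← Finset.card_pos, ← hBLcard]
          exact Finset.card_pos.2 ⟨b, hb⟩
        obtain ⟨b', hb'⟩ := hBne
        have h := hB hb'
        rw [Finset.powersetCard_zero, Finset.mem_singleton] at h
        rwa [h] at hb'
      simpa using hcross ∅ hA0 ∅ hB0
    · exact HiltonAux.main n k l hn hkl A B AL BL hA hB hcross hAL hBL hALcard hBLcard
        hALinit hBLinit
  · -- n < k + l : any k-set and l-set inside [1, n] intersect
    intro a ha b hb
    obtain ⟨hasub, hacard⟩ := Finset.mem_powersetCard.1 (hAL ha)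
    obtain ⟨hbsub, hbcard⟩ := Finset.mem_powersetCard.1 (hBL hb)
    have h1 : #(a ∪ b) ≤ n := by
      have h := Finset.card_le_card (Finset.union_subset hasub hbsub)
      rwa [Nat.card_Icc, Nat.add_sub_cancel] at h
    have h2 : #(a ∪ b) + #(a ∩ b) = #a + #b := Finset.card_union_add_card_inter a b
    rw [← Finset.card_pos]
    omega
end

section
/- Let r > 2 and let n, h, K be positive integers with n = h + K. Suppose F_0 ⊆ C([n],K) and F_1, ..., F_{r-1} ⊆ C([n],h) are non-empty cross-intersecting families with |F_0| ≥ C(n-1, K-1). Then |F_0| + Σ_{i=1}^{r-1} |F_i| ≤ C(n-1, K-1) + (r-1)·C(n-1, h-1), with equality only if there is an intersecting family F ⊆ C([n],h) with |F| = C(n-1,h-1) such that F_i = F for all 1 ≤ i ≤ r-1 and F_0 = C([n],K) \ {[n] \ F : F ∈ F}. -/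
theorem stmt_16 (r n h K : ℕ) (hr : 2 < r) (hh : 0 < h) (hK : 0 < K) (hn : n = h + K)
    (F₀ : Finset (Finset ℕ)) (F : ℕ → Finset (Finset ℕ))
    (hF₀ : F₀ ⊆ (Finset.Icc 1 n).powersetCard K)
    (hF : ∀ i ∈ Finset.Icc 1 (r - 1), F i ⊆ (Finset.Icc 1 n).powersetCard h)
    (hne₀ : F₀.Nonempty) (hne : ∀ i ∈ Finset.Icc 1 (r - 1), (F i).Nonempty)
    (hbig : (n - 1).choose (K - 1) ≤ F₀.card)
    (hcross₀ : ∀ i ∈ Finset.Icc 1 (r - 1), ∀ A ∈ F₀, ∀ B ∈ F i, (A ∩ B).Nonempty)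
    (hcross : ∀ i ∈ Finset.Icc 1 (r - 1), ∀ j ∈ Finset.Icc 1 (r - 1), i ≠ j →
      ∀ A ∈ F i, ∀ B ∈ F j, (A ∩ B).Nonempty) :
    F₀.card + ∑ i ∈ Finset.Icc 1 (r - 1), (F i).card
      ≤ (n - 1).choose (K - 1) + (r - 1) * (n - 1).choose (h - 1)
    ∧ (F₀.card + ∑ i ∈ Finset.Icc 1 (r - 1), (F i).card
          = (n - 1).choose (K - 1) + (r - 1) * (n - 1).choose (h - 1)
        → ∃ G : Finset (Finset ℕ), G ⊆ (Finset.Icc 1 n).powersetCard h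
            ∧ (∀ A ∈ G, ∀ B ∈ G, (A ∩ B).Nonempty)
            ∧ G.card = (n - 1).choose (h - 1)
            ∧ (∀ i ∈ Finset.Icc 1 (r - 1), F i = G)
            ∧ F₀ = ((Finset.Icc 1 n).powersetCard K) \ G.image (fun g => Finset.Icc 1 n \ g)) := by
  set U := Finset.Icc 1 n with hUdef
  have hUcard : U.card = n := by simp [hUdef]
  set c1 := (n - 1).choose (K - 1) with hc1
  set c2 := (n - 1).choose (h - 1) with hc2
  set a := F₀.card with ha
  -- binomial identities
  have hNh : n.choose h = c2 + c1 := by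
    have hs : (n - 1).choose h = c1 := by
      rw [hc1]
      have := Nat.choose_symm (show K - 1 ≤ n - 1 by omega) (n := n - 1)
      have h3 : (n - 1) - (K - 1) = h := by omega
      rw [h3] at this
      exact this
    have e1 : n.choose h = (n - 1).choose (h - 1) + (n - 1).choose h := by
      conv_lhs => rw [show n = (n - 1) + 1 by omega, show h = (h - 1) + 1 by omega]
      rw [Nat.choose_succ_succ]
      have h4 : h - 1 + 1 = h := by omega
      rw [Nat.succ_eq_add_one, h4]
    rw [e1, hs]
  have hNK : n.choose K = c2 + c1 := by
    rw [← hNh]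
    have := Nat.choose_symm (show K ≤ n by omega) (n := n)
    have h4 : n - K = h := by omega
    rw [h4] at this
    omega
  -- complement facts
  have hcompK : ∀ A ∈ F₀, U \ A ∈ U.powersetCard h := by
    intro A hA
    have := hF₀ hA
    rw [Finset.mem_powersetCard] at this ⊢
    refine ⟨Finset.sdiff_subset, ?_⟩
    rw [Finset.card_sdiff_of_subset this.1, hUcard, this.2]
    omega
  have hsubU₀ : ∀ A ∈ F₀, A ⊆ U := by
    intro A hA; exact (Finset.mem_powersetCard.1 (hF₀ hA)).1
  have hinj₀ : Set.InjOn (fun A => U \ A) F₀ := by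
    intro A hA B hB hAB
    have h1 : U \ (U \ A) = A := Finset.sdiff_sdiff_eq_self (hsubU₀ A hA)
    have h2 : U \ (U \ B) = B := Finset.sdiff_sdiff_eq_self (hsubU₀ B hB)
    simp only at hAB
    rw [← h1, ← h2, hAB]
  have himg₀ : F₀.image (fun A => U \ A) ⊆ U.powersetCard h := by
    intro B hB
    obtain ⟨A, hA, rfl⟩ := Finset.mem_image.1 hB
    exact hcompK A hA
  have hcardimg₀ : (F₀.image (fun A => U \ A)).card = a :=
    Finset.card_image_of_injOn hinj₀
  -- key inclusion
  have key : ∀ i ∈ Finset.Icc 1 (r - 1),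
      F i ⊆ U.powersetCard h \ F₀.image (fun A => U \ A) := by
    intro i hi B hB
    rw [Finset.mem_sdiff]
    refine ⟨hF i hi hB, ?_⟩
    intro hmem
    obtain ⟨A, hA, hAB⟩ := Finset.mem_image.1 hmem
    have hint := hcross₀ i hi A hA B hB
    rw [← hAB] at hint
    obtain ⟨x, hx⟩ := hint
    rw [Finset.mem_inter, Finset.mem_sdiff] at hx
    exact hx.2.2 hx.1
  have hcardsd : (U.powersetCard h \ F₀.image (fun A => U \ A)).card
      = n.choose h - a := by
    rw [Finset.card_sdiff_of_subset himg₀, hcardimg₀, Finset.card_powersetCard, hUcard]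
  have haN : a ≤ n.choose K := by
    rw [ha]
    calc F₀.card ≤ (U.powersetCard K).card := Finset.card_le_card hF₀
    _ = n.choose K := by rw [Finset.card_powersetCard, hUcard]
  have haN' : a ≤ c2 + c1 := by rw [← hNK]; exact haN
  -- each |F i| ≤ N - a
  have hFle : ∀ i ∈ Finset.Icc 1 (r - 1), (F i).card ≤ n.choose h - a := by
    intro i hi
    calc (F i).card ≤ (U.powersetCard h \ F₀.image (fun A => U \ A)).card :=
          Finset.card_le_card (key i hi)
    _ = n.choose h - a := hcardsd
  have hsum : ∑ i ∈ Finset.Icc 1 (r - 1), (F i).card ≤ (r - 1) * (n.choose h - a) := by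
    have := Finset.sum_le_card_nsmul (Finset.Icc 1 (r - 1)) (fun i => (F i).card)
      (n.choose h - a) hFle
    simpa [Nat.card_Icc, smul_eq_mul] using this
  -- arithmetic decomposition
  have hdec : (r - 1) * c2 = (r - 1) * (n.choose h - a) + (r - 1) * (a - c1) := by
    rw [← Nat.mul_add]
    congr 1
    omega
  have hmul2 : 2 * (a - c1) ≤ (r - 1) * (a - c1) :=
    Nat.mul_le_mul_right _ (by omega)
  have hmain : a + ∑ i ∈ Finset.Icc 1 (r - 1), (F i).card ≤ c1 + (r - 1) * c2 := by
    rw [hdec]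
    have h1 : a - c1 ≤ (r - 1) * (a - c1) :=
      le_trans (by omega) hmul2
    omega
  refine ⟨hmain, ?_⟩
  intro heq
  -- equality analysis: a = c1
  have haeq : a = c1 := by
    rw [hdec] at heq
    have hP := hsum
    generalize hPd : (r - 1) * (n.choose h - a) = P at heq hP
    generalize hQd : (r - 1) * (a - c1) = Q at heq hmul2
    omega
  -- each F i has card c2 and equals the sdiff set
  have hsdcard : (U.powersetCard h \ F₀.image (fun A => U \ A)).card = c2 := by
    rw [hcardsd, hNh]; omega
  have hsumeq : ∑ i ∈ Finset.Icc 1 (r - 1), (F i).card = (r - 1) * c2 := by omega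
  have hFle2 : ∀ i ∈ Finset.Icc 1 (r - 1), (F i).card ≤ c2 := by
    intro i hi
    have := hFle i hi
    rw [hNh] at this
    omega
  have hFcard : ∀ i ∈ Finset.Icc 1 (r - 1), (F i).card = c2 := by
    intro i hi
    have hsplit : (F i).card + ∑ j ∈ (Finset.Icc 1 (r - 1)).erase i, (F j).card
        = ∑ j ∈ Finset.Icc 1 (r - 1), (F j).card :=
      Finset.add_sum_erase (Finset.Icc 1 (r - 1)) (fun j => (F j).card) hi
    have hrest : ∑ j ∈ (Finset.Icc 1 (r - 1)).erase i, (F j).card ≤ (r - 2) * c2 := by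
      have h5 : ∑ j ∈ (Finset.Icc 1 (r - 1)).erase i, (F j).card
          ≤ ((Finset.Icc 1 (r - 1)).erase i).card • c2 :=
        Finset.sum_le_card_nsmul ((Finset.Icc 1 (r - 1)).erase i)
          (fun j => (F j).card) c2 (fun j hj => hFle2 j (Finset.mem_of_mem_erase hj))
      have hcard : ((Finset.Icc 1 (r - 1)).erase i).card = r - 2 := by
        rw [Finset.card_erase_of_mem hi, Nat.card_Icc]; omega
      rw [hcard, smul_eq_mul] at h5
      exact h5
    have hrc : (r - 1) * c2 = (r - 2) * c2 + c2 := by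
      have : r - 1 = (r - 2) + 1 := by omega
      rw [this, Nat.succ_mul]
    have := hFle2 i hi
    omega
  have hFeq : ∀ i ∈ Finset.Icc 1 (r - 1),
      F i = U.powersetCard h \ F₀.image (fun A => U \ A) := by
    intro i hi
    apply Finset.eq_of_subset_of_card_le (key i hi)
    rw [hsdcard, hFcard i hi]
  have h1mem : (1 : ℕ) ∈ Finset.Icc 1 (r - 1) := by
    rw [Finset.mem_Icc]; omega
  have h2mem : (2 : ℕ) ∈ Finset.Icc 1 (r - 1) := by
    rw [Finset.mem_Icc]; omega
  refine ⟨F 1, hF 1 h1mem, ?_, hFcard 1 h1mem, ?_, ?_⟩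
  · -- intersecting
    intro A hA B hB
    have := hcross 1 h1mem 2 h2mem (by norm_num) A hA
    rw [hFeq 2 h2mem, ← hFeq 1 h1mem] at this
    exact this B hB
  · intro i hi
    rw [hFeq i hi, hFeq 1 h1mem]
  · -- F₀ = powersetCard K \ image of G
    have hsubU₁ : ∀ B ∈ F 1, B ⊆ U := by
      intro B hB; exact (Finset.mem_powersetCard.1 (hF 1 h1mem hB)).1
    have hinj₁ : Set.InjOn (fun B => U \ B) (F 1) := by
      intro A hA B hB hAB
      have h1 : U \ (U \ A) = A := Finset.sdiff_sdiff_eq_self (hsubU₁ A hA)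
      have h2 : U \ (U \ B) = B := Finset.sdiff_sdiff_eq_self (hsubU₁ B hB)
      simp only at hAB
      rw [← h1, ← h2, hAB]
    have himg₁ : (F 1).image (fun B => U \ B) ⊆ U.powersetCard K := by
      intro A hA
      obtain ⟨B, hB, rfl⟩ := Finset.mem_image.1 hA
      have := hF 1 h1mem hB
      rw [Finset.mem_powersetCard] at this ⊢
      refine ⟨Finset.sdiff_subset, ?_⟩
      rw [Finset.card_sdiff_of_subset this.1, hUcard, this.2]
      omega
    have hF₀sub : F₀ ⊆ U.powersetCard K \ (F 1).image (fun g => U \ g) := by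
      intro A hA
      rw [Finset.mem_sdiff]
      refine ⟨hF₀ hA, ?_⟩
      intro hmem
      obtain ⟨B, hB, hBA⟩ := Finset.mem_image.1 hmem
      have hint := hcross₀ 1 h1mem A hA B hB
      rw [← hBA] at hint
      obtain ⟨x, hx⟩ := hint
      rw [Finset.mem_inter, Finset.mem_sdiff] at hx
      exact hx.1.2 hx.2
    symm
    apply (Finset.eq_of_subset_of_card_le hF₀sub ?_).symm
    rw [Finset.card_sdiff_of_subset himg₁, Finset.card_image_of_injOn hinj₁,
      Finset.card_powersetCard, hUcard, hFcard 1 h1mem, hNK]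
    omega
end

section
/- Let n, k, l be positive integers with n ≥ 2k and let F_1 ⊆ C([n],k), F_2 ⊆ C([n],k) be cross-intersecting families (possibly empty). If 2 ≤ n/k (i.e., n ≥ 2k), then |F_1| + |F_2| ≤ max{ C(n,k), 2·C(n-1,k-1) }. -/
theorem stmt_18 (n k l : ℕ) (hk : 0 < k) (hl : 0 < l) (hn : 2 * k ≤ n)
    (F₁ F₂ : Finset (Finset ℕ))
    (hF₁ : F₁ ⊆ (Finset.Icc 1 n).powersetCard k)
    (hF₂ : F₂ ⊆ (Finset.Icc 1 n).powersetCard k)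
    (hcross : ∀ A ∈ F₁, ∀ B ∈ F₂, (A ∩ B).Nonempty) :
    F₁.card + F₂.card ≤ max (n.choose k) (2 * (n - 1).choose (k - 1)) := by
  refine le_trans ?_ (le_max_left _ _)
  set X := Finset.Icc 1 n with hX
  have hXcard : X.card = n := by simp [hX]
  have hkn : k ≤ n - k := by omega
  -- complements of F₂
  set F₂' := F₂.image (fun B => X \ B) with hF2'
  have hmem2 : ∀ B ∈ F₂, B ⊆ X ∧ B.card = k := by
    intro B hB
    exact Finset.mem_powersetCard.1 (hF₂ hB)
  have hcard2 : F₂'.card = F₂.card := by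
    apply Finset.card_image_of_injOn
    intro B1 h1 B2 h2 h
    have hb1 := (hmem2 B1 h1).1
    have hb2 := (hmem2 B2 h2).1
    have h' := congrArg (fun s => X \ s) h
    simpa [Finset.sdiff_sdiff_self_left, Finset.inter_eq_right.2 hb1,
      Finset.inter_eq_right.2 hb2] using h'
  have hmem2' : ∀ C ∈ F₂', C ⊆ X ∧ C.card = n - k := by
    intro C hC
    obtain ⟨B, hB, rfl⟩ := Finset.mem_image.1 hC
    refine ⟨Finset.sdiff_subset, ?_⟩
    rw [Finset.card_sdiff_of_subset (hmem2 B hB).1, hXcard, (hmem2 B hB).2]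
  -- the k-sets contained in some complement
  set N := (X.powersetCard k).filter (fun S => ∃ C ∈ F₂', S ⊆ C) with hN
  set d := (n - k).choose k with hd
  have hdpos : 0 < d := Nat.choose_pos hkn
  -- double counting
  have hlow : ∀ C ∈ F₂', (N.filter (fun S => S ⊆ C)).card = d := by
    intro C hC
    have : N.filter (fun S => S ⊆ C) = C.powersetCard k := by
      ext S
      simp only [hN, Finset.mem_filter, Finset.mem_powersetCard]
      constructor
      · rintro ⟨⟨⟨-, hSk⟩, -⟩, hSC⟩
        exact ⟨hSC, hSk⟩
      · rintro ⟨hSC, hSk⟩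
        exact ⟨⟨⟨hSC.trans (hmem2' C hC).1, hSk⟩, C, hC, hSC⟩, hSC⟩
    rw [this, Finset.card_powersetCard, (hmem2' C hC).2]
  have hup : ∀ S ∈ N, (F₂'.filter (fun C => S ⊆ C)).card ≤ d := by
    intro S hS
    have hSX : S ⊆ X ∧ S.card = k := Finset.mem_powersetCard.1 (Finset.mem_filter.1 hS).1
    have : (F₂'.filter (fun C => S ⊆ C)).card ≤ ((X \ S).powersetCard (n - 2 * k)).card := by
      apply Finset.card_le_card_of_injOn (fun C => C \ S)
      · intro C hC
        obtain ⟨hCF, hSC⟩ := Finset.mem_filter.1 hC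
        refine Finset.mem_powersetCard.2 ⟨Finset.sdiff_subset_sdiff (hmem2' C hCF).1 le_rfl, ?_⟩
        rw [Finset.card_sdiff_of_subset hSC, (hmem2' C hCF).2, hSX.2]
        omega
      · intro C1 h1 C2 h2 h
        have h1' := (Finset.mem_filter.1 h1).2
        have h2' := (Finset.mem_filter.1 h2).2
        have h'' : C1 \ S = C2 \ S := h
        calc C1 = C1 \ S ∪ S := (Finset.sdiff_union_of_subset h1').symm
          _ = C2 \ S ∪ S := by rw [h'']
          _ = C2 := Finset.sdiff_union_of_subset h2'
    rw [Finset.card_powersetCard, Finset.card_sdiff_of_subset hSX.1, hXcard, hSX.2] at this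
    have heq : (n - k).choose (n - 2 * k) = d := by
      have : n - 2 * k = (n - k) - k := by omega
      rw [this, Nat.choose_symm hkn]
    omega
  have hkey : F₂'.card ≤ N.card := by
    have hsum : F₂'.card * d ≤ N.card * d := by
      calc F₂'.card * d = ∑ C ∈ F₂', (N.filter (fun S => S ⊆ C)).card := by
            rw [Finset.sum_congr rfl hlow, Finset.sum_const, smul_eq_mul]
        _ = ∑ C ∈ F₂', ∑ S ∈ N, if S ⊆ C then 1 else 0 :=
            Finset.sum_congr rfl fun C _ => Finset.card_filter _ _
        _ = ∑ S ∈ N, ∑ C ∈ F₂', if S ⊆ C then 1 else 0 := Finset.sum_comm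
        _ = ∑ S ∈ N, (F₂'.filter (fun C => S ⊆ C)).card :=
            Finset.sum_congr rfl fun S _ => (Finset.card_filter _ _).symm
        _ ≤ ∑ S ∈ N, d := Finset.sum_le_sum hup
        _ = N.card * d := by rw [Finset.sum_const, smul_eq_mul]
    exact Nat.le_of_mul_le_mul_right hsum hdpos
  -- F₁ and N are disjoint
  have hdisj : Disjoint F₁ N := by
    rw [Finset.disjoint_left]
    intro S hS1 hSN
    obtain ⟨-, C, hC, hSC⟩ := Finset.mem_filter.1 hSN
    obtain ⟨B, hB, rfl⟩ := Finset.mem_image.1 hC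
    obtain ⟨x, hx⟩ := hcross S hS1 B hB
    rw [Finset.mem_inter] at hx
    exact (Finset.mem_sdiff.1 (hSC hx.1)).2 hx.2
  calc F₁.card + F₂.card = F₁.card + F₂'.card := by rw [hcard2]
    _ ≤ F₁.card + N.card := by omega
    _ = (F₁ ∪ N).card := (Finset.card_union_of_disjoint hdisj).symm
    _ ≤ (X.powersetCard k).card := by
        apply Finset.card_le_card
        intro S hS
        rcases Finset.mem_union.1 hS with h | h
        · exact hF₁ h
        · exact (Finset.mem_filter.1 h).1
    _ = n.choose k := by rw [Finset.card_powersetCard, hXcard]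
end
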